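/- arXiv:2304.03517 — 7 statements merged into one kernel-verified Lean document; each statement's English description precedes it below -/
import Mathlib

section
/- Let 0 < a ≤ 1 be real and m ≥ 0 an integer. Then the limit defining γ_H(m,a+1) exists and γ_H(m,a+1) = γ_H(m,a) − γ(m,a)/a, where γ_H(m,a) = lim_{x→∞} ( Σ_{0≤n≤x} H_n(a) log^m(n+a)/(n+a) − log^{m+2}(x+a)/(m+2) − γ(0,a)·log^{m+1}(x+a)/(m+1) ) and similarly for γ_H(m,a+1) with a replaced by a+1. -/
open Filter Finset MeasureTheory

/-- `Hgen a n = ∑_{k=0}^n 1/(k+a)`. -/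
noncomputable def Hgen (a : ℝ) (n : ℕ) : ℝ := ∑ k ∈ Finset.range (n + 1), 1 / ((k : ℝ) + a)

lemma Hgen_shift (a : ℝ) (n : ℕ) : Hgen a (n + 1) = 1 / a + Hgen (a + 1) n := by
  have h : Hgen a (n + 1)
      = (∑ i ∈ Finset.range (n + 1), 1 / (((i + 1 : ℕ) : ℝ) + a)) + 1 / (((0 : ℕ) : ℝ) + a) :=
    Finset.sum_range_succ' _ _
  rw [h]
  simp only [Nat.cast_zero, zero_add, Nat.cast_add, Nat.cast_one]
  rw [add_comm]
  congr 1
  unfold Hgen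
  apply Finset.sum_congr rfl
  intro k _
  ring_nf

lemma key_sum (a : ℝ) (m N : ℕ) :
    ∑ n ∈ Finset.range (N + 1),
        Hgen (a + 1) n * Real.log ((n : ℝ) + (a + 1)) ^ m / ((n : ℝ) + (a + 1))
    = (∑ n ∈ Finset.range (N + 2), Hgen a n * Real.log ((n : ℝ) + a) ^ m / ((n : ℝ) + a))
      - (1 / a) * ∑ n ∈ Finset.range (N + 2), Real.log ((n : ℝ) + a) ^ m / ((n : ℝ) + a) := by
  rw [Finset.sum_range_succ' (fun n => Hgen a n * Real.log ((n : ℝ) + a) ^ m / ((n : ℝ) + a)) (N+1),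
      Finset.sum_range_succ' (fun n => Real.log ((n : ℝ) + a) ^ m / ((n : ℝ) + a)) (N+1)]
  have h0 : Hgen a 0 = 1 / a := by simp [Hgen]
  rw [mul_add, Finset.mul_sum]
  have hcancel : Hgen a 0 * Real.log ((0:ℕ) + a) ^ m / ((0:ℕ) + a)
      = 1 / a * (Real.log ((0:ℕ) + a) ^ m / ((0:ℕ) + a)) := by
    rw [h0]; ring
  rw [hcancel]
  rw [show ∀ x y z : ℝ, x + y - (z + y) = x - z by intros; ring]
  rw [← Finset.sum_sub_distrib]
  apply Finset.sum_congr rfl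
  intro n _
  have hc : ((n : ℝ) + (a + 1)) = (((n + 1 : ℕ) : ℝ) + a) := by push_cast; ring
  rw [Hgen_shift a n, hc]
  ring

lemma pow_sub_pow_le_aux {u v : ℝ} (hu : 0 ≤ u) (huv : u ≤ v) (p : ℕ) :
    v ^ p - u ^ p ≤ (p : ℝ) * v ^ (p - 1) * (v - u) := by
  have hv : 0 ≤ v := hu.trans huv
  have h := geom_sum₂_mul v u p
  rw [← h]
  have hsum : (∑ i ∈ Finset.range p, v ^ i * u ^ (p - 1 - i)) ≤ (p : ℝ) * v ^ (p - 1) := by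
    calc (∑ i ∈ Finset.range p, v ^ i * u ^ (p - 1 - i))
        ≤ ∑ i ∈ Finset.range p, v ^ (p - 1) := by
          apply Finset.sum_le_sum
          intro i hi
          have hi' : i ≤ p - 1 := Nat.le_sub_one_of_lt (Finset.mem_range.mp hi)
          calc v ^ i * u ^ (p - 1 - i) ≤ v ^ i * v ^ (p - 1 - i) := by
                apply mul_le_mul_of_nonneg_left (pow_le_pow_left₀ hu huv _) (pow_nonneg hv i)
            _ = v ^ (p - 1) := by rw [← pow_add, Nat.add_sub_cancel' hi']
      _ = (p : ℝ) * v ^ (p - 1) := by simp [Finset.sum_const, nsmul_eq_mul]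
  exact mul_le_mul_of_nonneg_right hsum (by linarith)

lemma logpow_floor_diff (a : ℝ) (ha : 0 < a) (p : ℕ) :
    Tendsto (fun y : ℝ => Real.log (y + a) ^ p - Real.log ((⌊y⌋₊ : ℝ) + a) ^ p)
      atTop (nhds 0) := by
  have key : ∀ y : ℝ, 2 ≤ y →
      0 ≤ Real.log (y + a) ^ p - Real.log ((⌊y⌋₊ : ℝ) + a) ^ p ∧
      Real.log (y + a) ^ p - Real.log ((⌊y⌋₊ : ℝ) + a) ^ p
        ≤ (p : ℝ) * (Real.log (y + a) ^ (p - 1) / (y - 1)) := by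
    intro y hy
    have hy0 : (0:ℝ) ≤ y := by linarith
    have hfl : (1:ℝ) ≤ (⌊y⌋₊ : ℝ) := by
      exact_mod_cast Nat.one_le_cast.mpr (Nat.le_floor (by exact_mod_cast (by linarith : (1:ℝ) ≤ y)))
    have hfl_le : (⌊y⌋₊ : ℝ) ≤ y := Nat.floor_le hy0
    have hfl_gt : y - 1 < (⌊y⌋₊ : ℝ) := Nat.sub_one_lt_floor y
    have hu0 : 0 ≤ Real.log ((⌊y⌋₊ : ℝ) + a) := Real.log_nonneg (by linarith)
    have huv : Real.log ((⌊y⌋₊ : ℝ) + a) ≤ Real.log (y + a) :=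
      Real.log_le_log (by linarith) (by linarith)
    constructor
    · have := pow_le_pow_left₀ hu0 huv p
      linarith
    · have h1 : Real.log (y + a) ^ p - Real.log ((⌊y⌋₊ : ℝ) + a) ^ p
          ≤ (p : ℝ) * Real.log (y + a) ^ (p - 1)
            * (Real.log (y + a) - Real.log ((⌊y⌋₊ : ℝ) + a)) :=
        pow_sub_pow_le_aux hu0 huv p
      have h2 : Real.log (y + a) - Real.log ((⌊y⌋₊ : ℝ) + a) ≤ 1 / (y - 1) := by
        have hpos : (0:ℝ) < (⌊y⌋₊ : ℝ) + a := by linarith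
        have hyd : (0:ℝ) < y - 1 := by linarith
        have heq : Real.log (y + a) - Real.log ((⌊y⌋₊ : ℝ) + a)
            = Real.log ((y + a) / ((⌊y⌋₊ : ℝ) + a)) :=
          (Real.log_div (by linarith) (by linarith)).symm
        rw [heq]
        have hle : Real.log ((y + a) / ((⌊y⌋₊ : ℝ) + a)) ≤ (y + a) / ((⌊y⌋₊ : ℝ) + a) - 1 :=
          Real.log_le_sub_one_of_pos (by positivity)
        have heq2 : (y + a) / ((⌊y⌋₊ : ℝ) + a) - 1 = (y - (⌊y⌋₊ : ℝ)) / ((⌊y⌋₊ : ℝ) + a) := by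
          field_simp
          ring
        rw [heq2] at hle
        refine hle.trans ?_
        apply div_le_div₀ (by positivity) (by linarith) hyd (by linarith)
      calc Real.log (y + a) ^ p - Real.log ((⌊y⌋₊ : ℝ) + a) ^ p
          ≤ (p : ℝ) * Real.log (y + a) ^ (p - 1)
            * (Real.log (y + a) - Real.log ((⌊y⌋₊ : ℝ) + a)) := h1
        _ ≤ (p : ℝ) * Real.log (y + a) ^ (p - 1) * (1 / (y - 1)) := by
            apply mul_le_mul_of_nonneg_left h2
            have : 0 ≤ Real.log (y + a) := Real.log_nonneg (by linarith)
            positivity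
        _ = (p : ℝ) * (Real.log (y + a) ^ (p - 1) / (y - 1)) := by ring
  have hg : Tendsto (fun y : ℝ => (p : ℝ) * (Real.log (y + a) ^ (p - 1) / (y - 1)))
      atTop (nhds 0) := by
    have hbase : Tendsto (fun x : ℝ => Real.log x ^ (p-1) / (1 * x + (-1 - a))) atTop (nhds 0) :=
      Real.tendsto_pow_log_div_mul_add_atTop 1 (-1 - a) (p-1) one_ne_zero
    have hcomp : Tendsto (fun y : ℝ => Real.log (y + a) ^ (p - 1) / (y - 1)) atTop (nhds 0) := by
      have := hbase.comp (tendsto_atTop_add_const_right atTop a tendsto_id)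
      convert this using 2 with y
      simp [Function.comp]
      ring_nf
    simpa using hcomp.const_mul (p : ℝ)
  apply squeeze_zero' (by filter_upwards [eventually_ge_atTop (2:ℝ)] with y hy using (key y hy).1)
    (by filter_upwards [eventually_ge_atTop (2:ℝ)] with y hy using (key y hy).2) hg

theorem stmt1 (a : ℝ) (ha0 : 0 < a) (ha1 : a ≤ 1) (m : ℕ)
    (γ0a γ0a1 γma γHma : ℝ)
    -- `γ(0,a)`
    (hγ0a : Tendsto
      (fun N : ℕ => (∑ n ∈ Finset.range (N + 1), 1 / ((n : ℝ) + a)) - Real.log ((N : ℝ) + a))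
      atTop (nhds γ0a))
    -- `γ(0,a+1)`
    (hγ0a1 : Tendsto
      (fun N : ℕ =>
        (∑ n ∈ Finset.range (N + 1), 1 / ((n : ℝ) + (a + 1))) - Real.log ((N : ℝ) + (a + 1)))
      atTop (nhds γ0a1))
    -- the generalized Stieltjes constant `γ(m,a)`
    (hγma : Tendsto
      (fun N : ℕ =>
        (∑ n ∈ Finset.range (N + 1), Real.log ((n : ℝ) + a) ^ m / ((n : ℝ) + a))
          - Real.log ((N : ℝ) + a) ^ (m + 1) / ((m : ℝ) + 1))
      atTop (nhds γma))
    -- the harmonic Stieltjes constant `γ_H(m,a)`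
    (hγHma : Tendsto (fun x : ℝ =>
        (∑ n ∈ Finset.range (Nat.floor x + 1),
            Hgen a n * Real.log ((n : ℝ) + a) ^ m / ((n : ℝ) + a))
          - Real.log (x + a) ^ (m + 2) / ((m : ℝ) + 2)
          - γ0a * Real.log (x + a) ^ (m + 1) / ((m : ℝ) + 1)) atTop (nhds γHma)) :
    -- the limit defining `γ_H(m,a+1)` exists and equals `γ_H(m,a) - γ(m,a)/a`
    Tendsto (fun x : ℝ =>
        (∑ n ∈ Finset.range (Nat.floor x + 1),
            Hgen (a + 1) n * Real.log ((n : ℝ) + (a + 1)) ^ m / ((n : ℝ) + (a + 1)))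
          - Real.log (x + (a + 1)) ^ (m + 2) / ((m : ℝ) + 2)
          - γ0a1 * Real.log (x + (a + 1)) ^ (m + 1) / ((m : ℝ) + 1)) atTop
      (nhds (γHma - γma / a)) := by
  have ha0' : a ≠ 0 := ne_of_gt ha0
  -- Step 1 : γ0a1 = γ0a - 1/a
  have hγ0a1eq : γ0a1 = γ0a - 1 / a := by
    have hseq : ∀ N : ℕ,
        (∑ n ∈ Finset.range (N + 1), 1 / ((n : ℝ) + (a + 1))) - Real.log ((N : ℝ) + (a + 1))
        = ((∑ n ∈ Finset.range ((N + 1) + 1), 1 / ((n : ℝ) + a))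
            - Real.log (((N + 1 : ℕ) : ℝ) + a)) - 1 / a := by
      intro N
      have hs : (∑ n ∈ Finset.range ((N + 1) + 1), 1 / ((n : ℝ) + a))
          = 1 / a + ∑ n ∈ Finset.range (N + 1), 1 / ((n : ℝ) + (a + 1)) := by
        have := Hgen_shift a N
        unfold Hgen at this
        exact this
      have hl : Real.log ((N : ℝ) + (a + 1)) = Real.log (((N + 1 : ℕ) : ℝ) + a) := by
        congr 1; push_cast; ring
      rw [hs, hl]; ring
    have h2 : Tendsto
        (fun N : ℕ =>
          (∑ n ∈ Finset.range (N + 1), 1 / ((n : ℝ) + (a + 1))) - Real.log ((N : ℝ) + (a + 1)))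
        atTop (nhds (γ0a - 1 / a)) := by
      have := (hγ0a.comp (tendsto_add_atTop_nat 1)).sub_const (1 / a)
      apply this.congr
      intro N
      exact (hseq N).symm
    exact tendsto_nhds_unique hγ0a1 h2
  -- Step 2 : limit of the first bracket
  have hP1 : Tendsto (fun x : ℝ =>
      (∑ n ∈ Finset.range ((⌊x⌋₊ + 1) + 1),
          Hgen a n * Real.log ((n : ℝ) + a) ^ m / ((n : ℝ) + a))
        - Real.log ((x + 1) + a) ^ (m + 2) / ((m : ℝ) + 2)
        - γ0a * Real.log ((x + 1) + a) ^ (m + 1) / ((m : ℝ) + 1)) atTop (nhds γHma) := by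
    have hcomp := hγHma.comp (tendsto_atTop_add_const_right atTop (1 : ℝ) tendsto_id)
    apply hcomp.congr'
    filter_upwards [eventually_ge_atTop (0 : ℝ)] with x hx
    have hfl : ⌊x + 1⌋₊ = ⌊x⌋₊ + 1 := Nat.floor_add_one hx
    simp only [Function.comp, id_eq, hfl]
  -- Step 3 : limit of the second bracket
  have hQ : Tendsto (fun x : ℝ =>
      (∑ n ∈ Finset.range ((⌊x⌋₊ + 1) + 1), Real.log ((n : ℝ) + a) ^ m / ((n : ℝ) + a))
        - Real.log (((⌊x⌋₊ + 1 : ℕ) : ℝ) + a) ^ (m + 1) / ((m : ℝ) + 1)) atTop (nhds γma) := by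
    exact hγma.comp ((tendsto_add_atTop_nat 1).comp tendsto_nat_floor_atTop)
  have hD : Tendsto (fun x : ℝ =>
      Real.log ((x + 1) + a) ^ (m + 1) - Real.log (((⌊x⌋₊ + 1 : ℕ) : ℝ) + a) ^ (m + 1))
      atTop (nhds 0) := by
    have hcomp := (logpow_floor_diff a ha0 (m + 1)).comp
      (tendsto_atTop_add_const_right atTop (1 : ℝ) tendsto_id)
    apply hcomp.congr'
    filter_upwards [eventually_ge_atTop (0 : ℝ)] with x hx
    have hfl : ⌊x + 1⌋₊ = ⌊x⌋₊ + 1 := Nat.floor_add_one hx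
    simp only [Function.comp, id_eq, hfl]
  have hP2 : Tendsto (fun x : ℝ =>
      (∑ n ∈ Finset.range ((⌊x⌋₊ + 1) + 1), Real.log ((n : ℝ) + a) ^ m / ((n : ℝ) + a))
        - Real.log ((x + 1) + a) ^ (m + 1) / ((m : ℝ) + 1)) atTop (nhds γma) := by
    have := hQ.sub (hD.div_const ((m : ℝ) + 1))
    rw [zero_div, sub_zero] at this
    apply this.congr
    intro x
    ring
  -- Step 4 : combine
  have hfinal := hP1.sub (hP2.const_mul (1 / a))
  have hval : γHma - 1 / a * γma = γHma - γma / a := by ring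
  rw [hval] at hfinal
  apply hfinal.congr
  intro x
  have hks := key_sum a m ⌊x⌋₊
  have hxa : x + (a + 1) = (x + 1) + a := by ring
  rw [hxa, hks, hγ0a1eq]
  ring
end

section
/- Let 0 < a ≤ 1 be real. Then, as x → ∞, Σ_{0≤n≤x} H_n(a) − (x+a)·log(x+a) − (x+a)·(γ(0,a) − 1) = O( log(x+a) ); that is, there exist constants C > 0 and x₀ ≥ 1 such that the left-hand side is bounded in absolute value by C·log(x+a) for all x ≥ x₀. -/
open Filter Finset MeasureTheory

lemma Hgen_succ (a : ℝ) (n : ℕ) :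
    Hgen a (n + 1) = Hgen a n + 1 / ((n : ℝ) + 1 + a) := by
  simp [Hgen, Finset.sum_range_succ]

lemma sum_Hgen (a : ℝ) (ha : 0 < a) (N : ℕ) :
    ∑ n ∈ Finset.range (N + 1), Hgen a n
      = ((N : ℝ) + 1 + a) * Hgen a N - ((N : ℝ) + 1) := by
  induction N with
  | zero =>
      simp [Hgen]
      field_simp
      ring
  | succ n ih =>
      rw [Finset.sum_range_succ, ih, Hgen_succ]
      have h : (0:ℝ) < (n:ℝ) + 1 + a := by positivity
      push_cast
      field_simp
      ring

lemma log_sub_log_le {y z : ℝ} (hy : 0 < y) (hz : y ≤ z) :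
    Real.log z - Real.log y ≤ (z - y) / y := by
  have hz0 : 0 < z := lt_of_lt_of_le hy hz
  have h := Real.log_le_sub_one_of_pos (show (0:ℝ) < z / y by positivity)
  rw [Real.log_div hz0.ne' hy.ne'] at h
  have : (z - y) / y = z / y - 1 := by rw [sub_div, div_self hy.ne']
  linarith [this ▸ h]

lemma le_log_sub_log {y z : ℝ} (hy : 0 < y) (hz : y ≤ z) :
    (z - y) / z ≤ Real.log z - Real.log y := by
  have hz0 : 0 < z := lt_of_lt_of_le hy hz
  have h2 := Real.log_le_sub_one_of_pos (show (0:ℝ) < y / z by positivity)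
  rw [Real.log_div hy.ne' hz0.ne'] at h2
  have h3 : (z - y) / z = 1 - y / z := by rw [sub_div, div_self hz0.ne']
  rw [h3]
  linarith

theorem stmt4 (a : ℝ) (ha0 : 0 < a) (ha1 : a ≤ 1) (γ0 : ℝ)
    (hγ0 : Tendsto
      (fun N : ℕ => (∑ n ∈ Finset.range (N + 1), 1 / ((n : ℝ) + a)) - Real.log ((N : ℝ) + a))
      atTop (nhds γ0)) :
    ∃ C : ℝ, 0 < C ∧ ∃ x₀ : ℝ, 1 ≤ x₀ ∧ ∀ x : ℝ, x₀ ≤ x →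
      |(∑ n ∈ Finset.range (Nat.floor x + 1), Hgen a n)
          - (x + a) * Real.log (x + a) - (x + a) * (γ0 - 1)|
        ≤ C * Real.log (x + a) := by
  set t : ℕ → ℝ := fun N => Hgen a N - Real.log ((N : ℝ) + a) with ht
  have hγ0' : Tendsto t atTop (nhds γ0) := hγ0
  have hpos : ∀ N : ℕ, (0:ℝ) < (N:ℝ) + a := fun N => by positivity
  -- t is antitone
  have hant : Antitone t := by
    apply antitone_nat_of_succ_le
    intro n
    have h1 := le_log_sub_log (hpos n) (show ((n:ℝ)+a) ≤ ((n+1:ℕ):ℝ)+a by push_cast; linarith)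
    have h2 : (((n+1:ℕ):ℝ) + a - ((n:ℝ)+a)) / (((n+1:ℕ):ℝ)+a) = 1 / ((n:ℝ)+1+a) := by
      push_cast; ring_nf
    rw [h2] at h1
    simp only [ht, Hgen_succ]
    push_cast
    push_cast at h1
    linarith
  -- s = t - 1/(N+a) is monotone
  have hmono : Monotone (fun N : ℕ => t N - 1 / ((N:ℝ) + a)) := by
    apply monotone_nat_of_le_succ
    intro n
    have h1 := log_sub_log_le (hpos n) (show ((n:ℝ)+a) ≤ ((n+1:ℕ):ℝ)+a by push_cast; linarith)
    have h2 : (((n+1:ℕ):ℝ) + a - ((n:ℝ)+a)) / ((n:ℝ)+a) = 1 / ((n:ℝ)+a) := by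
      push_cast; ring_nf
    rw [h2] at h1
    simp only [ht, Hgen_succ]
    push_cast
    push_cast at h1
    linarith
  have hσ : Tendsto (fun N : ℕ => t N - 1 / ((N:ℝ) + a)) atTop (nhds γ0) := by
    have h0 : Tendsto (fun N : ℕ => 1 / ((N:ℝ) + a)) atTop (nhds 0) := by
      simp only [one_div]
      exact (tendsto_atTop_add_const_right atTop a tendsto_natCast_atTop_atTop).inv_tendsto_atTop
    simpa using hγ0'.sub h0
  have hlow : ∀ N, γ0 ≤ t N := fun N => hant.le_of_tendsto hγ0' N
  have hupp : ∀ N, t N - 1 / ((N:ℝ) + a) ≤ γ0 := fun N => hmono.ge_of_tendsto hσ N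
  refine ⟨|γ0| + 6, by positivity, 3, by norm_num, fun x hx => ?_⟩
  set N : ℕ := Nat.floor x with hN
  have hx0 : (0:ℝ) ≤ x := by linarith
  have hNx : (N:ℝ) ≤ x := Nat.floor_le hx0
  have hxN : x < (N:ℝ) + 1 := Nat.lt_floor_add_one x
  have hN3 : (3:ℝ) ≤ (N:ℝ) := by
    have : (3:ℕ) ≤ N := Nat.le_floor (by exact_mod_cast hx)
    exact_mod_cast this
  set nn : ℝ := (N:ℝ) with hnn
  set L : ℝ := Real.log (nn + a) with hL
  set Lx : ℝ := Real.log (x + a) with hLx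
  have hna1 : (1:ℝ) ≤ nn + a := by linarith
  have hLpos : 0 ≤ L := Real.log_nonneg hna1
  have hLle : L ≤ Lx := Real.log_le_log (by linarith) (by linarith)
  have hLd : Lx - L ≤ 1 / (nn + a) := by
    have h1 := log_sub_log_le (show (0:ℝ) < nn + a by linarith) (show nn + a ≤ x + a by linarith)
    have h2 : (x + a - (nn + a)) / (nn + a) ≤ 1 / (nn + a) := by
      gcongr
      linarith
    linarith
  have hε : 0 ≤ t N - γ0 ∧ t N - γ0 ≤ 1 / (nn + a) := by
    constructor
    · linarith [hlow N]
    · linarith [hupp N]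
  set ε : ℝ := t N - γ0 with hε'
  have hHgen : Hgen a N = L + γ0 + ε := by
    simp only [ht, hε']
    ring
  rw [sum_Hgen a ha0 N, hHgen]
  have key : (nn + 1 + a) * (L + γ0 + ε) - (nn + 1) - (x + a) * Lx - (x + a) * (γ0 - 1)
      = (nn + 1 - x) * L + (x + a) * (L - Lx) + γ0 * (nn + 1 - x)
        + (nn + 1 + a) * ε + (x + a - nn - 1) := by ring
  rw [key]
  have habs1 : |nn + 1 - x| ≤ 1 := abs_le.2 ⟨by linarith, by linarith⟩
  have hfrac : (nn + 1 + a) * (1 / (nn + a)) ≤ 2 := by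
    rw [mul_one_div, div_le_iff₀ (by linarith)]
    linarith
  have hLx0 : 0 ≤ Lx := le_trans hLpos hLle
  have h1 : |(nn + 1 - x) * L| ≤ Lx := by
    rw [abs_mul, abs_of_nonneg hLpos]
    calc |nn + 1 - x| * L ≤ 1 * Lx := by
          apply mul_le_mul habs1 hLle hLpos (by norm_num)
      _ = Lx := one_mul Lx
  have h2 : |(x + a) * (L - Lx)| ≤ 2 := by
    rw [abs_mul, abs_of_nonneg (show (0:ℝ) ≤ x + a by linarith),
      abs_of_nonpos (by linarith : L - Lx ≤ 0)]
    calc (x + a) * -(L - Lx) ≤ (nn + 1 + a) * (1 / (nn + a)) := by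
          apply mul_le_mul (by linarith) (by linarith) (by linarith) (by linarith)
      _ ≤ 2 := hfrac
  have h3 : |γ0 * (nn + 1 - x)| ≤ |γ0| := by
    rw [abs_mul]
    calc |γ0| * |nn + 1 - x| ≤ |γ0| * 1 :=
          mul_le_mul_of_nonneg_left habs1 (abs_nonneg _)
      _ = |γ0| := mul_one _
  have h4 : |(nn + 1 + a) * ε| ≤ 2 := by
    rw [abs_mul, abs_of_nonneg (show (0:ℝ) ≤ nn + 1 + a by linarith),
      abs_of_nonneg hε.1]
    calc (nn + 1 + a) * ε ≤ (nn + 1 + a) * (1 / (nn + a)) :=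
          mul_le_mul_of_nonneg_left hε.2 (by linarith)
      _ ≤ 2 := hfrac
  have h5 : |x + a - nn - 1| ≤ 1 := abs_le.2 ⟨by linarith, by linarith⟩
  have hLx1 : 1 ≤ Lx := by
    rw [hLx, Real.le_log_iff_exp_le (by linarith)]
    have := Real.exp_one_lt_d9
    calc Real.exp 1 ≤ 2.7182818286 := le_of_lt this
      _ ≤ x + a := by linarith
  calc |(nn + 1 - x) * L + (x + a) * (L - Lx) + γ0 * (nn + 1 - x)
        + (nn + 1 + a) * ε + (x + a - nn - 1)|
      ≤ |(nn + 1 - x) * L| + |(x + a) * (L - Lx)| + |γ0 * (nn + 1 - x)|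
        + |(nn + 1 + a) * ε| + |x + a - nn - 1| := by
        have a1 := abs_add_le ((nn + 1 - x) * L + (x + a) * (L - Lx) + γ0 * (nn + 1 - x)
          + (nn + 1 + a) * ε) (x + a - nn - 1)
        have a2 := abs_add_le ((nn + 1 - x) * L + (x + a) * (L - Lx) + γ0 * (nn + 1 - x))
          ((nn + 1 + a) * ε)
        have a3 := abs_add_le ((nn + 1 - x) * L + (x + a) * (L - Lx)) (γ0 * (nn + 1 - x))
        have a4 := abs_add_le ((nn + 1 - x) * L) ((x + a) * (L - Lx))
        linarith
    _ ≤ Lx + 2 + |γ0| + 2 + 1 := by linarith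
    _ ≤ (|γ0| + 6) * Lx := by nlinarith [abs_nonneg γ0]
end

section
/- For every complex s with Re(s) > 1, the harmonic zeta function satisfies ζ_H(s) = −(1/Γ(s)) · ∫_0^∞ x^{s−1} log(1 − e^{−x}) / (1 − e^{−x}) dx. -/
open Filter Finset MeasureTheory

/-- The harmonic number `H_n = ∑_{k=1}^n 1/k` (so `Hnum n = ∑_{k<n} 1/(k+1)`). -/
noncomputable def Hnum (n : ℕ) : ℝ := ∑ k ∈ Finset.range n, 1 / ((k : ℝ) + 1)

/-- The harmonic zeta function `ζ_H(s) = ∑_{n=1}^∞ H_n/n^s`. -/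
noncomputable def zetaHnat (s : ℂ) : ℂ := ∑' n : ℕ, (Hnum (n + 1) : ℂ) / ((n : ℂ) + 1) ^ s

lemma Hnum_eq_harmonic (n : ℕ) : Hnum n = (harmonic n : ℝ) := by
  unfold Hnum harmonic
  push_cast
  simp [one_div]

lemma Hnum_nonneg (n : ℕ) : 0 ≤ Hnum n := by
  unfold Hnum
  positivity

lemma Hnum_le (n : ℕ) : Hnum (n + 1) ≤ 1 + Real.log (n + 1) := by
  rw [Hnum_eq_harmonic]
  have := harmonic_le_one_add_log (n + 1)
  push_cast at this ⊢
  linarith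

lemma summable_H (σ : ℝ) (hσ : 1 < σ) :
    Summable (fun n : ℕ => Hnum (n + 1) / ((n : ℝ) + 1) ^ σ) := by
  set ε : ℝ := (σ - 1) / 2 with hε_def
  have hε : 0 < ε := by rw [hε_def]; linarith
  have hsum : Summable (fun n : ℕ => (1 + 1 / ε) * ((n + 1 : ℕ) : ℝ) ^ (ε - σ)) := by
    refine Summable.mul_left _ ?_
    exact (Real.summable_nat_rpow.mpr (by rw [hε_def]; linarith)).comp_injective
      Nat.succ_injective
  refine Summable.of_nonneg_of_le (fun n => div_nonneg (Hnum_nonneg _) (by positivity)) (fun n => ?_) hsum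
  have hn1 : (0:ℝ) < (n : ℝ) + 1 := by positivity
  have h1 : (1:ℝ) ≤ ((n : ℝ) + 1) ^ ε := Real.one_le_rpow (by linarith) hε.le
  have hH : Hnum (n + 1) ≤ (1 + 1 / ε) * ((n : ℝ) + 1) ^ ε := by
    have h2 : Real.log ((n : ℝ) + 1) ≤ ((n : ℝ) + 1) ^ ε / ε :=
      Real.log_le_rpow_div hn1.le hε
    have := Hnum_le n
    calc Hnum (n + 1) ≤ 1 + Real.log ((n : ℝ) + 1) := by push_cast at this ⊢; linarith
      _ ≤ ((n : ℝ) + 1) ^ ε + (1 / ε) * ((n : ℝ) + 1) ^ ε := by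
          rw [div_eq_inv_mul] at h2; rw [one_div]; linarith
      _ = (1 + 1 / ε) * ((n : ℝ) + 1) ^ ε := by ring
  have hcast : ((n + 1 : ℕ) : ℝ) = (n : ℝ) + 1 := by push_cast; ring
  rw [hcast, Real.rpow_sub hn1, ← mul_div_assoc]
  gcongr

lemma hasSum_Hgeom {y : ℝ} (h0 : 0 < y) (h1 : y < 1) :
    HasSum (fun n : ℕ => Hnum (n + 1) * y ^ (n + 1)) (-Real.log (1 - y) / (1 - y)) := by
  have hy0 : (0:ℝ) ≤ y := h0.le
  set f : ℕ → ℝ := fun k => y ^ (k + 1) / (k + 1) with hf_def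
  set g : ℕ → ℝ := fun l => y ^ l with hg_def
  have hf : Summable fun k => ‖f k‖ := by
    refine Summable.of_nonneg_of_le (fun k => norm_nonneg _) (fun k => ?_)
      ((summable_geometric_of_lt_one hy0 h1).mul_left y)
    have hk : (0:ℝ) < (k:ℝ) + 1 := by positivity
    rw [Real.norm_eq_abs, abs_of_nonneg (by positivity), hf_def]
    calc y ^ (k + 1) / ((k:ℝ) + 1) ≤ y ^ (k + 1) / 1 := by gcongr; norm_num
      _ = y * y ^ k := by rw [div_one, pow_succ, mul_comm]
  have hg : Summable fun l => ‖g l‖ := by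
    simpa [hg_def, abs_of_nonneg (pow_nonneg hy0 _)] using
      summable_geometric_of_lt_one hy0 h1
  have hF : HasSum f (-Real.log (1 - y)) := by
    simpa [hf_def] using Real.hasSum_pow_div_log_of_abs_lt_one
      (x := y) (by rw [abs_of_nonneg hy0]; exact h1)
  have hG : HasSum g (1 - y)⁻¹ := hasSum_geometric_of_lt_one hy0 h1
  have key : ∀ n : ℕ, (∑ kl ∈ Finset.HasAntidiagonal.antidiagonal n, f kl.1 * g kl.2)
      = Hnum (n + 1) * y ^ (n + 1) := by
    intro n
    rw [Finset.Nat.sum_antidiagonal_eq_sum_range_succ_mk]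
    have : ∀ k ∈ Finset.range (n + 1), f k * g (n - k) = (1 / ((k:ℝ) + 1)) * y ^ (n + 1) := by
      intro k hk
      have hkn : k ≤ n := Nat.lt_succ_iff.mp (Finset.mem_range.mp hk)
      have hpow : y ^ (k + 1) * y ^ (n - k) = y ^ (n + 1) := by
        rw [← pow_add]; congr 1; omega
      simp only [hf_def, hg_def]
      field_simp
      rw [← pow_add]
      congr 1
      omega
    rw [Finset.sum_congr rfl this, ← Finset.sum_mul, Hnum]
  have hsum : Summable (fun n : ℕ => ∑ kl ∈ Finset.HasAntidiagonal.antidiagonal n, f kl.1 * g kl.2) :=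
    summable_sum_mul_antidiagonal_of_summable_mul (summable_mul_of_summable_norm hf hg)
  have htsum := tsum_mul_tsum_eq_tsum_sum_antidiagonal_of_summable_norm hf hg
  rw [hF.tsum_eq, hG.tsum_eq] at htsum
  have : HasSum (fun n : ℕ => ∑ kl ∈ Finset.HasAntidiagonal.antidiagonal n, f kl.1 * g kl.2)
      (-Real.log (1 - y) / (1 - y)) := by
    rw [div_eq_mul_inv, htsum]
    exact hsum.hasSum
  simpa only [key] using this

theorem stmt8 (s : ℂ) (hs : 1 < s.re) :
    zetaHnat s = -(1 / Complex.Gamma s) * ∫ x in Set.Ioi (0 : ℝ),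
      (x : ℂ) ^ (s - 1) * ((Real.log (1 - Real.exp (-x)) : ℝ) : ℂ)
        / (1 - ((Real.exp (-x) : ℝ) : ℂ)) := by
  have hσ : 0 < s.re := by linarith
  set F : ℝ → ℂ := fun t => ((Real.log (1 - Real.exp (-t)) : ℝ) : ℂ)
      / (1 - ((Real.exp (-t) : ℝ) : ℂ)) with hF_def
  set a : ℕ → ℂ := fun n => -((Hnum (n + 1) : ℝ) : ℂ) with ha_def
  set p : ℕ → ℝ := fun n => (n : ℝ) + 1 with hp_def
  have hp : ∀ n : ℕ, a n = 0 ∨ 0 < p n := fun n => Or.inr (by positivity)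
  have hFsum : ∀ t ∈ Set.Ioi (0:ℝ),
      HasSum (fun n : ℕ => a n * Real.exp (-p n * t)) (F t) := by
    intro t ht
    have ht : 0 < t := ht
    have h0 : 0 < Real.exp (-t) := Real.exp_pos _
    have h1 : Real.exp (-t) < 1 := by
      rw [Real.exp_lt_one_iff]; linarith
    have hreal := (hasSum_Hgeom h0 h1).neg
    have hC : HasSum (fun n : ℕ => ((-(Hnum (n + 1) * Real.exp (-t) ^ (n + 1)) : ℝ) : ℂ))
        ((-(-Real.log (1 - Real.exp (-t)) / (1 - Real.exp (-t))) : ℝ) : ℂ) :=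
      Complex.hasSum_ofReal.mpr hreal
    have hfun : (fun n : ℕ => a n * ((Real.exp (-p n * t) : ℝ) : ℂ))
        = fun n : ℕ => ((-(Hnum (n + 1) * Real.exp (-t) ^ (n + 1)) : ℝ) : ℂ) := by
      funext n
      have hexp : Real.exp (-p n * t) = Real.exp (-t) ^ (n + 1) := by
        have h : -p n * t = ((n + 1 : ℕ) : ℝ) * (-t) := by
          simp only [hp_def]; push_cast; ring
        rw [h, Real.exp_nat_mul]
      rw [hexp, ha_def]
      push_cast
      ring
    have hval : F t = ((-(-Real.log (1 - Real.exp (-t)) / (1 - Real.exp (-t))) : ℝ) : ℂ) := by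
      rw [hF_def]
      push_cast
      rw [neg_div, neg_neg]
    rw [hfun, hval]
    exact hC
  have hsum : Summable fun n : ℕ => ‖a n‖ / (p n) ^ s.re := by
    have := summable_H s.re hs
    refine this.congr fun n => ?_
    rw [ha_def, hp_def]
    simp [Complex.norm_real, abs_of_nonneg (Hnum_nonneg (n + 1))]
  have key := hasSum_mellin hp hσ hFsum hsum
  have hmellin : mellin F s = ∫ x in Set.Ioi (0 : ℝ),
      (x : ℂ) ^ (s - 1) * ((Real.log (1 - Real.exp (-x)) : ℝ) : ℂ)
        / (1 - ((Real.exp (-x) : ℝ) : ℂ)) := by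
    rw [mellin]
    refine setIntegral_congr_fun measurableSet_Ioi fun t _ => ?_
    rw [smul_eq_mul, hF_def, mul_div_assoc]
  have hterm : ∀ n : ℕ, Complex.Gamma s * a n / ((p n : ℝ) : ℂ) ^ s
      = -(Complex.Gamma s * ((Hnum (n + 1) : ℂ) / ((n : ℂ) + 1) ^ s)) := by
    intro n
    have : ((p n : ℝ) : ℂ) = (n : ℂ) + 1 := by rw [hp_def]; push_cast; ring
    rw [this, ha_def]
    ring
  have hkey2 : mellin F s = -(Complex.Gamma s * zetaHnat s) := by
    rw [← key.tsum_eq]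
    rw [tsum_congr hterm, tsum_neg, tsum_mul_left]
    rfl
  have hΓ : Complex.Gamma s ≠ 0 := by
    apply Complex.Gamma_ne_zero
    intro m h
    rw [h] at hs
    simp only [Complex.neg_re, Complex.natCast_re] at hs
    have : (0:ℝ) ≤ (m : ℝ) := Nat.cast_nonneg m
    linarith
  rw [← hmellin, hkey2]
  field_simp
end

section
/- Let a be a complex number with Re(a) > 0. For every complex s with Re(s) > 1, ζ_H(s,a) = ζ_H(s) + (1/Γ(s)) · ∫_0^∞ x^{s−1} ( e^{−a x} Φ(e^{−x}, 1; a) + log(1 − e^{−x}) ) / (1 − e^{−x}) dx. -/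
open Filter Finset MeasureTheory

/-- `Hc a n = ∑_{k=0}^n 1/(k+a)` for complex `a`. -/
noncomputable def Hc (a : ℂ) (n : ℕ) : ℂ := ∑ k ∈ Finset.range (n + 1), 1 / ((k : ℂ) + a)

/-- The harmonic Hurwitz zeta function `ζ_H(s,a) = ∑_{n=0}^∞ H_n(a)/(n+a)^s`. -/
noncomputable def zetaHc (s a : ℂ) : ℂ := ∑' n : ℕ, Hc a n / ((n : ℂ) + a) ^ s

/-- The Lerch transcendent `Φ(x,1;a) = ∑_{k=0}^∞ x^k/(k+a)`. -/
noncomputable def lerchPhi1 (x a : ℂ) : ℂ := ∑' k : ℕ, x ^ k / ((k : ℂ) + a)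

/-! ### Auxiliary integrability lemmas -/

lemma aux_integrableOn_rpow_mul_exp {σ : ℝ} (hσ : 0 < σ) {r : ℝ} (hr : 0 < r) :
    IntegrableOn (fun t : ℝ => t ^ (σ - 1) * Real.exp (-(r * t))) (Set.Ioi 0) := by
  have h := Real.GammaIntegral_convergent hσ
  rw [← mul_zero r, ← integrableOn_Ioi_comp_mul_left_iff _ _ hr] at h
  have h2 : IntegrableOn (fun x : ℝ => r ^ (1 - σ) * (Real.exp (-(r * x)) * (r * x) ^ (σ - 1)))
      (Set.Ioi 0) := h.const_mul (r ^ (1 - σ))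
  refine h2.congr_fun (fun t ht => ?_) measurableSet_Ioi
  have ht' : (0:ℝ) < t := ht
  dsimp only
  rw [Real.mul_rpow hr.le ht'.le,
    show r ^ (1-σ) * (Real.exp (-(r*t)) * (r ^ (σ-1) * t ^ (σ-1)))
      = (r ^ (1-σ) * r ^ (σ-1)) * (t ^ (σ-1) * Real.exp (-(r*t))) by ring,
    ← Real.rpow_add hr]
  norm_num

lemma aux_aesm (s b : ℂ) : AEStronglyMeasurable
    (fun t : ℝ => (t:ℂ) ^ (s - 1) * Complex.exp (-(b * t))) (volume.restrict (Set.Ioi 0)) := by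
  apply ContinuousOn.aestronglyMeasurable _ measurableSet_Ioi
  apply ContinuousOn.mul
  · exact fun t ht => (Complex.continuousAt_ofReal_cpow_const t (s-1)
      (Or.inr (ne_of_gt ht))).continuousWithinAt
  · exact (Complex.continuous_exp.comp
      ((continuous_const.mul Complex.continuous_ofReal).neg)).continuousOn

lemma aux_integrableOn_cpow_mul_cexp {s : ℂ} (hs : 0 < s.re) {b : ℂ} (hb : 0 < b.re) :
    IntegrableOn (fun t : ℝ => (t:ℂ) ^ (s - 1) * Complex.exp (-(b * t))) (Set.Ioi 0) := by
  refine (aux_integrableOn_rpow_mul_exp (σ := s.re) hs hb).mono' (aux_aesm s b) ?_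
  filter_upwards [ae_restrict_mem measurableSet_Ioi] with t ht
  have ht' : (0:ℝ) < t := ht
  rw [norm_mul,
    Complex.norm_cpow_eq_rpow_re_of_pos ht', Complex.norm_exp]
  simp only [Complex.sub_re, Complex.one_re, Complex.neg_re, Complex.mul_re,
    Complex.ofReal_re, Complex.ofReal_im, mul_zero, sub_zero]
  exact le_refl _

lemma aux_norm_integral {s : ℂ} (hs : 0 < s.re) {b : ℂ} (hb : 0 < b.re) (C : ℂ) :
    ∫ t in Set.Ioi (0:ℝ), ‖(t:ℂ) ^ (s - 1) * (C * Complex.exp (-(b * t)))‖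
      = ‖C‖ * ((1 / b.re) ^ s.re * Real.Gamma s.re) := by
  rw [← Real.integral_rpow_mul_exp_neg_mul_Ioi hs hb, ← integral_const_mul]
  refine setIntegral_congr_fun measurableSet_Ioi (fun t ht => ?_)
  have ht' : (0:ℝ) < t := ht
  rw [norm_mul, norm_mul,
    Complex.norm_cpow_eq_rpow_re_of_pos ht',
    Complex.norm_exp]
  simp only [Complex.sub_re, Complex.one_re, Complex.neg_re, Complex.mul_re,
    Complex.ofReal_re, Complex.ofReal_im, mul_zero, sub_zero]
  ring
lemma aux_integral_cpow_mul_cexp {s : ℂ} (hs : 0 < s.re) {b : ℂ} (hb : 0 < b.re) :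
    ∫ t in Set.Ioi (0:ℝ), (t:ℂ) ^ (s - 1) * Complex.exp (-(b * t))
      = Complex.Gamma s / b ^ s := by
  set U : Set ℂ := {z : ℂ | 0 < z.re} with hU
  have hUo : IsOpen U := isOpen_lt continuous_const Complex.continuous_re
  set f : ℂ → ℂ := fun z => ∫ t in Set.Ioi (0:ℝ), (t:ℂ) ^ (s - 1) * Complex.exp (-(z * t))
    with hf
  set g : ℂ → ℂ := fun z => Complex.Gamma s / z ^ s with hg
  suffices h : Set.EqOn f g U from h hb
  have hfd : DifferentiableOn ℂ f U := by
    rintro z₀ hz₀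
    have hz₀' : 0 < z₀.re := hz₀
    have hε0 : 0 < z₀.re / 2 := by positivity
    have key := hasDerivAt_integral_of_dominated_loc_of_deriv_le
      (μ := volume.restrict (Set.Ioi 0))
      (F := fun z (t:ℝ) => (t:ℂ) ^ (s-1) * Complex.exp (-(z * t)))
      (F' := fun z (t:ℝ) => (t:ℂ) ^ (s-1) * (Complex.exp (-(z * t)) * (-(t:ℂ))))
      (x₀ := z₀) (bound := fun t : ℝ => t ^ ((s.re + 1) - 1) * Real.exp (-(z₀.re / 2 * t)))
      (Metric.ball_mem_nhds z₀ hε0) (Filter.Eventually.of_forall fun z => aux_aesm s z)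
      (aux_integrableOn_cpow_mul_cexp hs hz₀') ?_ ?_ ?_ ?_
    · exact (key.2.differentiableAt).differentiableWithinAt
    · -- measurability of F' z₀
      refine ((aux_aesm s z₀).mul
        ((Complex.continuous_ofReal.neg).aestronglyMeasurable)).congr ?_
      filter_upwards with t
      simp only [Pi.mul_apply, Pi.neg_apply]
      ring
    · -- bound
      filter_upwards [ae_restrict_mem measurableSet_Ioi] with t ht z hz
      have ht' : (0:ℝ) < t := ht
      have hzre : z₀.re / 2 ≤ z.re := by
        have hdist : ‖z - z₀‖ < z₀.re / 2 := by
          rwa [Metric.mem_ball, Complex.dist_eq] at hz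
        have h2 : |z.re - z₀.re| < z₀.re / 2 :=
          lt_of_le_of_lt (by simpa using Complex.abs_re_le_norm (z - z₀)) hdist
        have h3 := abs_lt.mp h2
        linarith [h3.1]
      rw [norm_mul, norm_mul, Complex.norm_cpow_eq_rpow_re_of_pos ht',
        Complex.norm_exp, norm_neg,
        Complex.norm_real, Real.norm_eq_abs, abs_of_pos ht']
      simp only [Complex.sub_re, Complex.one_re, Complex.neg_re, Complex.mul_re,
        Complex.ofReal_re, Complex.ofReal_im, mul_zero, sub_zero]
      have hpow : t ^ (s.re - 1) * t = t ^ ((s.re + 1) - 1) := by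
        rw [show (s.re + 1) - 1 = (s.re - 1) + 1 by ring, Real.rpow_add ht', Real.rpow_one]
      calc t ^ (s.re - 1) * (Real.exp (-(z.re * t)) * t)
          = (t ^ (s.re - 1) * t) * Real.exp (-(z.re * t)) := by ring
        _ ≤ (t ^ (s.re - 1) * t) * Real.exp (-(z₀.re / 2 * t)) := by
            have : -(z.re * t) ≤ -(z₀.re / 2 * t) := by nlinarith
            have := Real.exp_le_exp.mpr this
            gcongr
        _ = t ^ ((s.re + 1) - 1) * Real.exp (-(z₀.re / 2 * t)) := by rw [hpow]
    · exact aux_integrableOn_rpow_mul_exp (by positivity : (0:ℝ) < s.re + 1) hε0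
    · -- differentiability in z
      filter_upwards [ae_restrict_mem measurableSet_Ioi] with t ht z hz
      have hd : HasDerivAt (fun z : ℂ => -(z * (t:ℂ))) (-(t:ℂ)) z := by
        simpa using ((hasDerivAt_id z).mul_const (t:ℂ)).fun_neg
      exact (hd.cexp).const_mul ((t:ℂ)^(s-1))
  have hgd : DifferentiableOn ℂ g U := by
    intro z hz
    have hz' : 0 < z.re := hz
    have hzne : z ≠ 0 := fun h => by rw [h] at hz'; simp at hz'
    have h1 : DifferentiableAt ℂ (fun z : ℂ => z ^ s) z :=
      differentiableAt_id.cpow (differentiableAt_const s) (Or.inl hz')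
    have h2 : z ^ s ≠ 0 := by
      simp [Complex.cpow_eq_zero_iff, hzne]
    exact ((differentiableAt_const _).div h1 h2).differentiableWithinAt
  have h_real : ∀ r : ℝ, 0 < r → f (r:ℂ) = g (r:ℂ) := by
    intro r hr
    have h := Complex.integral_cpow_mul_exp_neg_mul_Ioi hs hr
    have hrne : ((r:ℂ)).arg ≠ Real.pi := by
      rw [Complex.arg_ofReal_of_nonneg hr.le]
      exact Real.pi_ne_zero.symm
    rw [hf, hg]
    dsimp only
    rw [h, one_div, Complex.inv_cpow _ _ hrne, div_eq_mul_inv, mul_comm]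
  have hseq : Filter.Tendsto (fun n : ℕ => (((1 + ((n:ℝ)+1)⁻¹ : ℝ)) : ℂ)) Filter.atTop
      (nhdsWithin (1:ℂ) {(1:ℂ)}ᶜ) := by
    rw [tendsto_nhdsWithin_iff]
    constructor
    · have h0 : Filter.Tendsto (fun n : ℕ => 1 + ((n:ℝ)+1)⁻¹) Filter.atTop (nhds 1) := by
        have h1 := tendsto_one_div_add_atTop_nhds_zero_nat (𝕜 := ℝ)
        simp only [one_div] at h1
        simpa using tendsto_const_nhds.add h1
      have h2 := (Complex.continuous_ofReal.tendsto 1).comp h0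
      rw [Function.comp_def] at h2
      rw [show ((1:ℝ):ℂ) = (1:ℂ) from Complex.ofReal_one] at h2
      exact h2
    · refine Filter.Eventually.of_forall fun n => ?_
      simp only [Set.mem_compl_iff, Set.mem_singleton_iff]
      intro h
      rw [show (1:ℂ) = ((1:ℝ):ℂ) by norm_num] at h
      have h2 : 1 + ((n:ℝ)+1)⁻¹ = 1 := Complex.ofReal_injective h
      have hpos : 0 < ((n:ℝ)+1)⁻¹ := by positivity
      linarith
  have hfreq : ∃ᶠ z in nhdsWithin (1:ℂ) {(1:ℂ)}ᶜ, f z = g z :=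
    hseq.frequently (Filter.Frequently.of_forall fun n => h_real _ (by positivity))
  exact (hfd.analyticOnNhd hUo).eqOn_of_preconnected_of_frequently_eq (hgd.analyticOnNhd hUo)
    (convex_halfSpace_re_gt 0).isPreconnected (by simp [hU] : (1:ℂ) ∈ U) hfreq

/-! ### Series lemmas -/

lemma aux_re_le_norm {a : ℂ} (ha : 0 < a.re) (k : ℕ) : (k:ℝ) + a.re ≤ ‖(k:ℂ) + a‖ := by
  have := Complex.re_le_norm ((k:ℂ) + a)
  simpa [Complex.add_re, Complex.natCast_re] using this

lemma aux_summable_norm_u {a : ℂ} (ha : 0 < a.re) {y : ℂ} (hy : ‖y‖ < 1) :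
    Summable (fun k : ℕ => ‖y ^ k / ((k:ℂ) + a)‖) := by
  refine Summable.of_nonneg_of_le (fun k => norm_nonneg _) (fun k => ?_)
    ((summable_geometric_of_lt_one (norm_nonneg y) hy).div_const a.re)
  rw [norm_div, norm_pow]
  have h2 : a.re ≤ ‖(k:ℂ) + a‖ := by
    refine le_trans ?_ (aux_re_le_norm ha k)
    exact le_add_of_nonneg_left (Nat.cast_nonneg k)
  exact div_le_div_of_nonneg_left (by positivity) ha h2

lemma aux_hasSum_lerch {a : ℂ} (ha : 0 < a.re) {y : ℂ} (hy : ‖y‖ < 1) :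
    HasSum (fun k : ℕ => y ^ k / ((k:ℂ) + a)) (lerchPhi1 y a) :=
  ((aux_summable_norm_u ha hy).of_norm).hasSum

lemma hasSum_Hc_mul {a : ℂ} (ha : 0 < a.re) {y : ℂ} (hy : ‖y‖ < 1) :
    HasSum (fun n : ℕ => Hc a n * y ^ n) (lerchPhi1 y a * (1 - y)⁻¹) := by
  have hu : Summable fun k : ℕ => ‖y ^ k / ((k:ℂ) + a)‖ := aux_summable_norm_u ha hy
  have hv : Summable fun n : ℕ => ‖y ^ n‖ := by
    simpa only [norm_pow] using summable_geometric_of_lt_one (norm_nonneg y) hy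
  have heq : ∀ n : ℕ, ∑ k ∈ Finset.range (n+1), (y^k / ((k:ℂ)+a)) * y^(n-k)
      = Hc a n * y^n := by
    intro n
    rw [Hc, Finset.sum_mul]
    refine Finset.sum_congr rfl fun k hk => ?_
    have hk' : k ≤ n := Nat.lt_succ_iff.mp (Finset.mem_range.mp hk)
    rw [div_mul_eq_mul_div, ← pow_add, Nat.add_sub_cancel' hk']
    ring
  have hprod := tsum_mul_tsum_eq_tsum_sum_range_of_summable_norm hu hv
  have hsum : Summable fun n : ℕ => Hc a n * y^n :=
    Summable.congr (summable_norm_sum_mul_range_of_summable_norm hu hv).of_norm heq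
  have hval : ∑' n : ℕ, Hc a n * y^n = lerchPhi1 y a * (1 - y)⁻¹ := by
    calc ∑' n : ℕ, Hc a n * y^n
        = ∑' n : ℕ, ∑ k ∈ Finset.range (n+1), (y^k / ((k:ℂ)+a)) * y^(n-k) :=
          tsum_congr fun n => (heq n).symm
      _ = (∑' k : ℕ, y^k / ((k:ℂ)+a)) * ∑' n : ℕ, y^n := hprod.symm
      _ = lerchPhi1 y a * (1 - y)⁻¹ := by rw [tsum_geometric_of_norm_lt_one hy]; rfl
  exact hval ▸ hsum.hasSum

lemma aux_Hc_one (n : ℕ) : Hc 1 n = ((Hnum (n+1) : ℝ) : ℂ) := by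
  rw [Hc, Hnum]
  push_cast
  rfl

lemma aux_Hnum_le (n : ℕ) : Hnum (n+1) ≤ 1 + Real.log ((n:ℝ)+1) := by
  have h := harmonic_le_one_add_log (n+1)
  have h2 : Hnum (n+1) = ((harmonic (n+1) : ℚ) : ℝ) := by
    rw [Hnum, harmonic]
    push_cast
    simp [one_div]
  rw [h2]
  have h3 : ((n+1 : ℕ) : ℝ) = (n:ℝ) + 1 := by push_cast; ring
  rw [← h3]
  exact_mod_cast h

lemma aux_norm_Hc_le {a : ℂ} (ha : 0 < a.re) (n : ℕ) :
    ‖Hc a n‖ ≤ (min 1 a.re)⁻¹ * Hnum (n+1) := by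
  have hc0 : 0 < min 1 a.re := lt_min one_pos ha
  rw [Hc, Hnum, Finset.mul_sum]
  refine (norm_sum_le _ _).trans (Finset.sum_le_sum fun k _ => ?_)
  have hk : (0:ℝ) < (k:ℝ) + a.re := by positivity
  rw [norm_div, norm_one]
  have h3 : (1:ℝ)/‖(k:ℂ)+a‖ ≤ 1/((k:ℝ)+a.re) :=
    one_div_le_one_div_of_le hk (aux_re_le_norm ha k)
  refine h3.trans ?_
  have h4 : min 1 a.re * ((k:ℝ)+1) ≤ (k:ℝ) + a.re := by
    have hm1 : min 1 a.re ≤ 1 := min_le_left _ _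
    have hm2 : min 1 a.re ≤ a.re := min_le_right _ _
    nlinarith [Nat.cast_nonneg (α := ℝ) k]
  calc 1/((k:ℝ)+a.re) ≤ 1/(min 1 a.re * ((k:ℝ)+1)) :=
        one_div_le_one_div_of_le (by positivity) h4
    _ = (min 1 a.re)⁻¹ * (1/((k:ℝ)+1)) := by rw [one_div, mul_inv, one_div]

lemma aux_summable {a : ℂ} (ha : 0 < a.re) {σ : ℝ} (hσ : 1 < σ) :
    Summable (fun n : ℕ => ‖Hc a n‖ * ((1 / ((n:ℝ) + a.re)) ^ σ * Real.Gamma σ)) := by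
  set c := min 1 a.re with hc
  have hc0 : 0 < c := lt_min one_pos ha
  set ε := (σ - 1)/2 with hε
  have hε0 : 0 < ε := by rw [hε]; linarith
  have hεσ : ε - σ < -1 := by rw [hε]; linarith
  have hΓ : 0 ≤ Real.Gamma σ := (Real.Gamma_pos_of_pos (by linarith)).le
  have key : ∀ n : ℕ, ‖Hc a n‖ * ((1 / ((n:ℝ) + a.re)) ^ σ * Real.Gamma σ)
      ≤ (c⁻¹ * (1 + ε⁻¹) * (c⁻¹ ^ σ * Real.Gamma σ)) * ((n:ℝ)+1) ^ (ε - σ) := by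
    intro n
    have hn1 : (0:ℝ) < (n:ℝ) + 1 := by positivity
    have hna : (0:ℝ) < (n:ℝ) + a.re := by positivity
    have b1 : ‖Hc a n‖ ≤ c⁻¹ * (1 + ε⁻¹) * ((n:ℝ)+1)^ε := by
      refine (aux_norm_Hc_le ha n).trans ?_
      have b1a : Hnum (n+1) ≤ 1 + Real.log ((n:ℝ)+1) := aux_Hnum_le n
      have l1 : Real.log ((n:ℝ)+1) ≤ ε⁻¹ * ((n:ℝ)+1)^ε := by
        have hlr := Real.log_rpow hn1 ε
        have l2 : Real.log (((n:ℝ)+1)^ε) ≤ ((n:ℝ)+1)^ε :=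
          (Real.log_le_sub_one_of_pos (by positivity)).trans (by linarith)
        rw [hlr] at l2
        calc Real.log ((n:ℝ)+1) = ε⁻¹ * (ε * Real.log ((n:ℝ)+1)) := by field_simp
          _ ≤ ε⁻¹ * ((n:ℝ)+1)^ε := by
              exact mul_le_mul_of_nonneg_left l2 (by positivity)
      have l3 : (1:ℝ) ≤ ((n:ℝ)+1)^ε := Real.one_le_rpow (by linarith) hε0.le
      have b1b : 1 + Real.log ((n:ℝ)+1) ≤ (1 + ε⁻¹) * ((n:ℝ)+1)^ε := by nlinarith
      have hnn : 0 ≤ Hnum (n+1) := by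
        rw [Hnum]; exact Finset.sum_nonneg fun k _ => by positivity
      calc c⁻¹ * Hnum (n+1) ≤ c⁻¹ * ((1+ε⁻¹) * ((n:ℝ)+1)^ε) := by
            refine mul_le_mul_of_nonneg_left (b1a.trans b1b) (by positivity)
        _ = c⁻¹ * (1+ε⁻¹) * ((n:ℝ)+1)^ε := by ring
    have b2 : (1 / ((n:ℝ) + a.re)) ^ σ ≤ c⁻¹ ^ σ * ((n:ℝ)+1) ^ (-σ) := by
      have h4 : c * ((n:ℝ)+1) ≤ (n:ℝ) + a.re := by
        have hm1 : c ≤ 1 := min_le_left _ _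
        have hm2 : c ≤ a.re := min_le_right _ _
        nlinarith [Nat.cast_nonneg (α := ℝ) n]
      have h5 : (1:ℝ)/((n:ℝ)+a.re) ≤ c⁻¹ * ((n:ℝ)+1)⁻¹ := by
        rw [← mul_inv]
        exact one_div_le_one_div_of_le (by positivity) h4 |>.trans_eq (one_div _)
      calc (1/((n:ℝ)+a.re))^σ ≤ (c⁻¹ * ((n:ℝ)+1)⁻¹)^σ :=
            Real.rpow_le_rpow (by positivity) h5 (by linarith)
        _ = c⁻¹^σ * (((n:ℝ)+1)⁻¹)^σ := Real.mul_rpow (by positivity) (by positivity)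
        _ = c⁻¹^σ * ((n:ℝ)+1)^(-σ) := by rw [Real.inv_rpow hn1.le, ← Real.rpow_neg hn1.le]
    calc ‖Hc a n‖ * ((1/((n:ℝ)+a.re))^σ * Real.Gamma σ)
        ≤ (c⁻¹*(1+ε⁻¹)*((n:ℝ)+1)^ε) * ((c⁻¹^σ * ((n:ℝ)+1)^(-σ)) * Real.Gamma σ) := by
          refine mul_le_mul b1 (mul_le_mul_of_nonneg_right b2 hΓ) ?_ (by positivity)
          exact mul_nonneg (Real.rpow_nonneg (by positivity) _) hΓ
      _ = (c⁻¹ * (1 + ε⁻¹) * (c⁻¹^σ * Real.Gamma σ)) * (((n:ℝ)+1)^ε * ((n:ℝ)+1)^(-σ)) := by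
          ring
      _ = (c⁻¹ * (1 + ε⁻¹) * (c⁻¹^σ * Real.Gamma σ)) * ((n:ℝ)+1) ^ (ε - σ) := by
          rw [← Real.rpow_add hn1, ← sub_eq_add_neg]
  have hsummable : Summable (fun n : ℕ => ((n:ℝ)+1) ^ (ε - σ)) := by
    have h := Real.summable_nat_rpow.mpr hεσ
    have h2 := (summable_nat_add_iff 1).mpr h
    refine h2.congr fun n => ?_
    push_cast
    ring_nf
  refine Summable.of_nonneg_of_le (fun n => ?_) key (hsummable.mul_left _)
  exact mul_nonneg (norm_nonneg _)
    (mul_nonneg (Real.rpow_nonneg (by positivity) _) hΓ)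

/-! ### The term family and its Mellin transforms -/

noncomputable def mterm (s a : ℂ) (n : ℕ) (t : ℝ) : ℂ :=
  (t:ℂ) ^ (s-1) * (Hc a n * Complex.exp (-(((n:ℂ) + a) * t)))

lemma aux_bre {a : ℂ} (ha : 0 < a.re) (n : ℕ) : 0 < ((n:ℂ) + a).re := by
  rw [Complex.add_re, Complex.natCast_re]
  positivity

lemma mterm_integrableOn {s : ℂ} (hs : 0 < s.re) {a : ℂ} (ha : 0 < a.re) (n : ℕ) :
    IntegrableOn (mterm s a n) (Set.Ioi 0) := by
  have h : IntegrableOn (fun t : ℝ =>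
      Hc a n * ((t:ℂ) ^ (s-1) * Complex.exp (-(((n:ℂ)+a) * t)))) (Set.Ioi 0) :=
    (aux_integrableOn_cpow_mul_cexp hs (aux_bre ha n)).const_mul (Hc a n)
  refine h.congr_fun (fun t ht => ?_) measurableSet_Ioi
  rw [mterm]; ring

lemma mterm_integral {s : ℂ} (hs : 0 < s.re) {a : ℂ} (ha : 0 < a.re) (n : ℕ) :
    ∫ t in Set.Ioi (0:ℝ), mterm s a n t
      = Complex.Gamma s * (Hc a n / ((n:ℂ) + a) ^ s) := by
  have heq : ∀ t : ℝ, mterm s a n t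
      = Hc a n * ((t:ℂ)^(s-1) * Complex.exp (-(((n:ℂ)+a) * t))) := fun t => by
    rw [mterm]; ring
  simp_rw [heq]
  rw [integral_const_mul, aux_integral_cpow_mul_cexp hs (aux_bre ha n)]
  ring

lemma mterm_norm_integral {s : ℂ} (hs : 0 < s.re) {a : ℂ} (ha : 0 < a.re) (n : ℕ) :
    ∫ t in Set.Ioi (0:ℝ), ‖mterm s a n t‖
      = ‖Hc a n‖ * ((1 / ((n:ℝ) + a.re)) ^ s.re * Real.Gamma s.re) := by
  have h := aux_norm_integral hs (aux_bre ha n) (Hc a n)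
  rw [show ((n:ℂ)+a).re = (n:ℝ) + a.re by rw [Complex.add_re, Complex.natCast_re]] at h
  exact h

lemma mterm_summable_norm {s : ℂ} (hs : 1 < s.re) {a : ℂ} (ha : 0 < a.re) :
    Summable (fun n : ℕ => ∫ t in Set.Ioi (0:ℝ), ‖mterm s a n t‖) :=
  (aux_summable ha hs).congr fun n =>
    (mterm_norm_integral (lt_trans one_pos hs) ha n).symm

lemma aux_norm_y_lt_one {t : ℝ} (ht : 0 < t) : ‖Complex.exp (-(t:ℂ))‖ < 1 := by
  rw [Complex.norm_exp]
  simp only [Complex.neg_re, Complex.ofReal_re]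
  have := Real.exp_lt_exp.mpr (show -t < 0 by linarith)
  simpa using this

lemma mterm_hasSum {s a : ℂ} (ha : 0 < a.re) {t : ℝ} (ht : 0 < t) :
    HasSum (fun n : ℕ => mterm s a n t)
      ((t:ℂ)^(s-1) * Complex.exp (-(a * t)) *
        (lerchPhi1 (Complex.exp (-(t:ℂ))) a * (1 - Complex.exp (-(t:ℂ)))⁻¹)) := by
  have hy : ‖Complex.exp (-(t:ℂ))‖ < 1 := aux_norm_y_lt_one ht
  have h := (hasSum_Hc_mul ha hy).mul_left ((t:ℂ)^(s-1) * Complex.exp (-(a * t)))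
  have hfun : (fun n : ℕ => ((t:ℂ)^(s-1) * Complex.exp (-(a * t)))
      * (Hc a n * Complex.exp (-(t:ℂ)) ^ n)) = fun n => mterm s a n t := by
    funext n
    rw [← Complex.exp_nat_mul, mterm,
      show -(((n:ℂ)+a) * (t:ℂ)) = -(a * (t:ℂ)) + (n:ℂ) * (-(t:ℂ)) by ring,
      Complex.exp_add]
    ring
  rw [← hfun]
  exact h

lemma aux_hlog {t : ℝ} (ht : 0 < t) :
    Complex.exp (-(t:ℂ)) * lerchPhi1 (Complex.exp (-(t:ℂ))) 1
      = -(((Real.log (1 - Real.exp (-t)) : ℝ)) : ℂ) := by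
  have h1re : (0:ℝ) < (1:ℂ).re := by simp
  have hy : ‖Complex.exp (-(t:ℂ))‖ < 1 := aux_norm_y_lt_one ht
  have hyr : Complex.exp (-(t:ℂ)) = ((Real.exp (-t) : ℝ) : ℂ) := by
    rw [Complex.ofReal_exp, Complex.ofReal_neg]
  have hr : |Real.exp (-t)| < 1 := by
    rw [abs_of_pos (Real.exp_pos _)]
    have := Real.exp_lt_exp.mpr (show -t < 0 by linarith)
    simpa using this
  have hsR := Real.hasSum_pow_div_log_of_abs_lt_one hr
  have hsC := hsR.mapL Complex.ofRealCLM
  simp only [Complex.ofRealCLM_apply] at hsC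
  have hsY : HasSum (fun k : ℕ => Complex.exp (-(t:ℂ))
      * (Complex.exp (-(t:ℂ))^k / ((k:ℂ)+1)))
      (Complex.exp (-(t:ℂ)) * lerchPhi1 (Complex.exp (-(t:ℂ))) 1) :=
    (aux_hasSum_lerch h1re hy).mul_left _
  have hfun : (fun k : ℕ => Complex.exp (-(t:ℂ)) * (Complex.exp (-(t:ℂ))^k / ((k:ℂ)+1)))
      = fun k : ℕ => ((Real.exp (-t) ^ (k+1) / ((k:ℝ)+1) : ℝ) : ℂ) := by
    funext k
    rw [hyr]
    push_cast
    ring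
  rw [hfun] at hsY
  have := hsY.unique hsC
  rw [this]
  push_cast
  ring

lemma aux_pointwise {s a : ℂ} (ha : 0 < a.re) {t : ℝ} (ht : 0 < t) :
    ∑' n : ℕ, (mterm s a n t - mterm s 1 n t)
      = (t:ℂ)^(s-1) * (Complex.exp (-(a * (t:ℂ))) * lerchPhi1 (Complex.exp (-(t:ℂ))) a
          + ((Real.log (1 - Real.exp (-t)) : ℝ) : ℂ)) / (1 - Complex.exp (-(t:ℂ))) := by
  have h1re : (0:ℝ) < (1:ℂ).re := by simp
  have hA := mterm_hasSum (s := s) ha ht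
  have hB := mterm_hasSum (s := s) h1re ht
  rw [(hA.sub hB).tsum_eq]
  have hE1 : Complex.exp (-((1:ℂ) * (t:ℂ))) = Complex.exp (-(t:ℂ)) := by norm_num
  rw [hE1]
  have hlog := aux_hlog ht
  linear_combination (-(((t:ℂ)^(s-1)) * (1 - Complex.exp (-(t:ℂ)))⁻¹)) * hlog

theorem stmt9 (a : ℂ) (ha : 0 < a.re) (s : ℂ) (hs : 1 < s.re) :
    zetaHc s a = zetaHnat s + (1 / Complex.Gamma s) * ∫ x in Set.Ioi (0 : ℝ),
      (x : ℂ) ^ (s - 1) *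
        (Complex.exp (-(a * (x : ℂ))) * lerchPhi1 (Complex.exp (-(x : ℂ))) a
          + ((Real.log (1 - Real.exp (-x)) : ℝ) : ℂ))
        / (1 - Complex.exp (-(x : ℂ))) := by
  have hs0 : 0 < s.re := lt_trans one_pos hs
  have h1re : (0:ℝ) < (1:ℂ).re := by simp
  have Ia : ∀ n : ℕ, IntegrableOn (mterm s a n) (Set.Ioi 0) := mterm_integrableOn hs0 ha
  have I1 : ∀ n : ℕ, IntegrableOn (mterm s 1 n) (Set.Ioi 0) := mterm_integrableOn hs0 h1re
  have hD_int : ∀ n : ℕ,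
      IntegrableOn (fun t : ℝ => mterm s a n t - mterm s 1 n t) (Set.Ioi 0) :=
    fun n => (Ia n).sub (I1 n)
  have hD_sum : Summable
      (fun n : ℕ => ∫ t in Set.Ioi (0:ℝ), ‖mterm s a n t - mterm s 1 n t‖) := by
    refine Summable.of_nonneg_of_le (fun n => integral_nonneg fun t => norm_nonneg _)
      (fun n => ?_) ((mterm_summable_norm hs ha).add (mterm_summable_norm hs h1re))
    have h1 : ∫ t in Set.Ioi (0:ℝ), ‖mterm s a n t - mterm s 1 n t‖
        ≤ ∫ t in Set.Ioi (0:ℝ), (‖mterm s a n t‖ + ‖mterm s 1 n t‖) := by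
      refine integral_mono ((hD_int n).norm) (((Ia n).norm).add ((I1 n).norm)) ?_
      exact fun t => norm_sub_le _ _
    rwa [integral_add ((Ia n).norm) ((I1 n).norm)] at h1
  have hHS := hasSum_integral_of_summable_integral_norm (μ := volume.restrict (Set.Ioi 0))
    (F := fun n (t:ℝ) => mterm s a n t - mterm s 1 n t) hD_int hD_sum
  have hint_eq : ∫ t in Set.Ioi (0:ℝ), (∑' n : ℕ, (mterm s a n t - mterm s 1 n t))
      = ∫ x in Set.Ioi (0 : ℝ), (x : ℂ) ^ (s - 1) *
          (Complex.exp (-(a * (x : ℂ))) * lerchPhi1 (Complex.exp (-(x : ℂ))) a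
            + ((Real.log (1 - Real.exp (-x)) : ℝ) : ℂ))
          / (1 - Complex.exp (-(x : ℂ))) :=
    setIntegral_congr_fun measurableSet_Ioi fun t ht => aux_pointwise ha ht
  have Sa : Summable (fun n : ℕ => Complex.Gamma s * (Hc a n / ((n:ℂ)+a)^s)) := by
    refine Summable.of_norm_bounded (mterm_summable_norm hs ha) fun n => ?_
    rw [← mterm_integral hs0 ha n]
    exact norm_integral_le_integral_norm _
  have S1 : Summable (fun n : ℕ => Complex.Gamma s * (Hc 1 n / ((n:ℂ)+1)^s)) := by
    refine Summable.of_norm_bounded (mterm_summable_norm hs h1re) fun n => ?_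
    rw [← mterm_integral hs0 h1re n]
    exact norm_integral_le_integral_norm _
  have key : Complex.Gamma s * zetaHc s a - Complex.Gamma s * zetaHnat s
      = ∫ x in Set.Ioi (0 : ℝ), (x : ℂ) ^ (s - 1) *
          (Complex.exp (-(a * (x : ℂ))) * lerchPhi1 (Complex.exp (-(x : ℂ))) a
            + ((Real.log (1 - Real.exp (-x)) : ℝ) : ℂ))
          / (1 - Complex.exp (-(x : ℂ))) := by
    have h1 : Complex.Gamma s * zetaHc s a
        = ∑' n : ℕ, Complex.Gamma s * (Hc a n / ((n:ℂ)+a)^s) := by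
      rw [zetaHc, tsum_mul_left]
    have h2 : Complex.Gamma s * zetaHnat s
        = ∑' n : ℕ, Complex.Gamma s * (Hc 1 n / ((n:ℂ)+1)^s) := by
      rw [zetaHnat, tsum_mul_left]
      congr 1
      refine tsum_congr fun n => ?_
      rw [aux_Hc_one n]
    rw [h1, h2, ← Summable.tsum_sub Sa S1]
    calc ∑' n : ℕ, (Complex.Gamma s * (Hc a n / ((n:ℂ)+a)^s)
            - Complex.Gamma s * (Hc 1 n / ((n:ℂ)+1)^s))
        = ∑' n : ℕ, ∫ t in Set.Ioi (0:ℝ), (mterm s a n t - mterm s 1 n t) := by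
          refine tsum_congr fun n => ?_
          rw [integral_sub (Ia n) (I1 n), mterm_integral hs0 ha n, mterm_integral hs0 h1re n]
      _ = ∫ t in Set.Ioi (0:ℝ), (∑' n : ℕ, (mterm s a n t - mterm s 1 n t)) := hHS.tsum_eq
      _ = _ := hint_eq
  have hΓ : Complex.Gamma s ≠ 0 := Complex.Gamma_ne_zero_of_re_pos hs0
  rw [← key]
  field_simp
  ring
end

section
/- For every integer n ≥ 0, γ_{\widetilde{H}}(n) = (−1)^n Σ_{k=0}^n C(n,k) b_k c_{n−k}, where b_k is the k-th derivative of s ↦ 1/Γ(s) at s = 1 and c_k = ∫_0^∞ log(1 + e^{−x}) log^k(x) / (1 + e^{−x}) dx. -/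
open Filter Finset MeasureTheory
open Topology Asymptotics Set

/-- `b_k`, the `k`-th derivative of `s ↦ 1/Γ(s)` at `s = 1`. -/
noncomputable def bconst (k : ℕ) : ℂ := iteratedDeriv k (fun s : ℂ => 1 / Complex.Gamma s) 1

/-- `c_k = ∫_0^∞ log(1+e^{-x}) log^k(x) / (1+e^{-x}) dx`. -/
noncomputable def cconst (k : ℕ) : ℝ :=
  ∫ x in Set.Ioi (0 : ℝ), Real.log (1 + Real.exp (-x)) * Real.log x ^ k / (1 + Real.exp (-x))

namespace Stmt15Aux

noncomputable def fr (t : ℝ) : ℝ := Real.log (1 + Real.exp (-t)) / (1 + Real.exp (-t))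

noncomputable def ff (t : ℝ) : ℂ := (fr t : ℂ)

noncomputable def gg (k : ℕ) (t : ℝ) : ℂ := Real.log t ^ k • ff t

lemma one_add_exp_pos (t : ℝ) : 0 < 1 + Real.exp (-t) := by positivity

lemma fr_nonneg (t : ℝ) : 0 ≤ fr t := by
  apply div_nonneg _ (one_add_exp_pos t).le
  apply Real.log_nonneg
  nlinarith [Real.exp_pos (-t)]

lemma fr_le_exp (t : ℝ) : fr t ≤ Real.exp (-t) := by
  have h1 : Real.log (1 + Real.exp (-t)) ≤ Real.exp (-t) := by
    have := Real.log_le_sub_one_of_pos (one_add_exp_pos t)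
    linarith
  calc fr t ≤ Real.log (1 + Real.exp (-t)) := by
        apply div_le_self _ (by nlinarith [Real.exp_pos (-t)])
        apply Real.log_nonneg; nlinarith [Real.exp_pos (-t)]
    _ ≤ Real.exp (-t) := h1

lemma continuous_fr : Continuous fr := by
  apply Continuous.div
  · exact (continuous_const.add (Real.continuous_exp.comp continuous_neg)).log
      fun t => (one_add_exp_pos t).ne'
  · exact continuous_const.add (Real.continuous_exp.comp continuous_neg)
  · exact fun t => (one_add_exp_pos t).ne'

lemma continuous_ff : Continuous ff := Complex.continuous_ofReal.comp continuous_fr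

lemma gg_zero : gg 0 = ff := by funext t; simp [gg]

lemma gg_succ (k : ℕ) : gg (k + 1) = fun t => Real.log t • gg k t := by
  funext t; simp [gg, pow_succ', mul_smul]

lemma gg_locInt (k : ℕ) : LocallyIntegrableOn (gg k) (Set.Ioi 0) := by
  apply ContinuousOn.locallyIntegrableOn _ measurableSet_Ioi
  apply ContinuousOn.fun_smul _ continuous_ff.continuousOn
  exact (Real.continuousOn_log.mono fun t ht => ne_of_gt ht).pow k

lemma gg_top (k : ℕ) : ∀ a : ℝ, gg k =O[atTop] (· ^ (-a)) := by
  induction k with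
  | zero =>
      intro a
      rw [gg_zero]
      have h1 : ff =O[atTop] (fun t => Real.exp (-t)) := by
        apply Asymptotics.IsBigO.of_bound 1
        filter_upwards [eventually_ge_atTop (0:ℝ)] with t _
        simpa [ff, Complex.norm_real, Real.norm_eq_abs,
          abs_of_nonneg (fr_nonneg t), abs_of_nonneg (Real.exp_pos (-t)).le] using fr_le_exp t
      refine h1.trans ?_
      simpa [neg_one_mul] using (isLittleO_exp_neg_mul_rpow_atTop one_pos (-a)).isBigO
  | succ k ih =>
      intro a
      rw [gg_succ]
      exact isBigO_rpow_top_log_smul (lt_add_one a) (ih (a + 1))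

lemma gg_bot (k : ℕ) : ∀ b : ℝ, 0 < b → gg k =O[𝓝[>] (0:ℝ)] (· ^ (-b)) := by
  induction k with
  | zero =>
      intro b hb
      apply Asymptotics.IsBigO.of_bound 1
      filter_upwards [Ioo_mem_nhdsGT_of_mem (Set.mem_Ico.2 ⟨le_refl (0:ℝ), one_pos⟩)]
        with t ht
      have h1 : ‖gg 0 t‖ ≤ 1 := by
        rw [gg_zero]
        simp only [ff, Complex.norm_real, Real.norm_eq_abs, abs_of_nonneg (fr_nonneg t)]
        calc fr t ≤ Real.exp (-t) := fr_le_exp t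
          _ ≤ Real.exp 0 := Real.exp_le_exp.2 (by linarith [ht.1])
          _ = 1 := Real.exp_zero
      have h2 : (1:ℝ) ≤ t ^ (-b) := by
        calc (1:ℝ) = t ^ (0:ℝ) := (Real.rpow_zero t).symm
          _ ≤ t ^ (-b) := Real.rpow_le_rpow_of_exponent_ge ht.1 ht.2.le (by linarith)
      rw [Real.norm_eq_abs, abs_of_nonneg (Real.rpow_nonneg ht.1.le _)]
      nlinarith
  | succ k ih =>
      intro b hb
      rw [gg_succ]
      exact isBigO_rpow_zero_log_smul (by linarith : b/2 < b) (ih (b/2) (by linarith))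

lemma mellin_gg_hasDeriv (k : ℕ) {s : ℂ} (hs : 0 < s.re) :
    HasDerivAt (mellin (gg k)) (mellin (gg (k + 1)) s) s := by
  have := (mellin_hasDerivAt_of_isBigO_rpow (E := ℂ) (a := s.re + 1) (b := s.re / 2)
    (gg_locInt k) (gg_top k (s.re + 1)) (lt_add_one _)
    (gg_bot k (s.re / 2) (by linarith)) (by linarith)).2
  rwa [show (fun t => Real.log t • gg k t) = gg (k + 1) from (gg_succ k).symm] at this

lemma iteratedDeriv_mellin_ff (m : ℕ) : ∀ s : ℂ, 0 < s.re →
    iteratedDeriv m (mellin ff) s = mellin (gg m) s := by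
  induction m with
  | zero => intro s _; simp [gg_zero]
  | succ m ih =>
      intro s hs
      rw [iteratedDeriv_succ]
      have hev : iteratedDeriv m (mellin ff) =ᶠ[𝓝 s] mellin (gg m) := by
        have hopen : IsOpen {z : ℂ | 0 < z.re} := by
          exact isOpen_lt continuous_const Complex.continuous_re
        filter_upwards [hopen.mem_nhds hs] with z hz using ih z hz
      rw [hev.deriv_eq]
      exact (mellin_gg_hasDeriv m hs).deriv

/-- `H_{k+1} ≤ k+1`. -/
lemma Hnum_le (k : ℕ) : Hnum k ≤ k := by
  unfold Hnum
  calc ∑ i ∈ Finset.range k, 1/((i:ℝ)+1) ≤ ∑ i ∈ Finset.range k, 1 := by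
        apply Finset.sum_le_sum; intro i _
        rw [div_le_one (by positivity)]
        linarith [Nat.cast_nonneg (α := ℝ) i]
    _ = k := by simp

lemma Hnum_nonneg (k : ℕ) : 0 ≤ Hnum k := by
  unfold Hnum; apply Finset.sum_nonneg; intro i _; positivity

/-- The power-series identity `∑ (-1)^k H_{k+1} x^{k+1} = log(1+x)/(1+x)` for `0 ≤ x < 1`. -/
lemma hasSum_fr {x : ℝ} (hx0 : 0 ≤ x) (hx1 : x < 1) :
    HasSum (fun k : ℕ => (-1) ^ k * Hnum (k + 1) * x ^ (k + 1))
      (Real.log (1 + x) / (1 + x)) := by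
  have hax : |(-x)| < 1 := by rw [abs_neg, abs_of_nonneg hx0]; exact hx1
  have hgeo : HasSum (fun n : ℕ => (-x) ^ n) ((1 + x)⁻¹) := by
    have := hasSum_geometric_of_abs_lt_one hax
    rwa [sub_neg_eq_add] at this
  have hlog : HasSum (fun n : ℕ => -((-x) ^ (n + 1) / ((n:ℝ) + 1))) (Real.log (1 + x)) := by
    have := (Real.hasSum_pow_div_log_of_abs_lt_one hax).neg
    rwa [neg_neg, sub_neg_eq_add] at this
  have hxgeo : Summable (fun n : ℕ => x ^ n) :=
    summable_geometric_of_lt_one hx0 hx1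
  have hg' : Summable (fun n : ℕ => ‖(-x) ^ n‖) := by
    simpa [abs_pow, abs_neg, abs_of_nonneg hx0] using hxgeo
  have hl' : Summable (fun n : ℕ => ‖-((-x) ^ (n + 1) / ((n:ℝ) + 1))‖) := by
    apply hxgeo.of_nonneg_of_le (fun n => norm_nonneg _)
    intro n
    have h1 : ‖-((-x) ^ (n + 1) / ((n:ℝ) + 1))‖ = x ^ (n + 1) / ((n:ℝ) + 1) := by
      rw [norm_neg, norm_div, norm_pow, norm_neg, Real.norm_eq_abs, Real.norm_eq_abs,
        abs_of_nonneg hx0, abs_of_nonneg (by positivity : (0:ℝ) ≤ (n:ℝ) + 1)]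
    rw [h1]
    calc x ^ (n + 1) / ((n:ℝ) + 1) ≤ x ^ (n + 1) :=
          div_le_self (by positivity) (by norm_num)
      _ ≤ x ^ n := by
          calc x ^ (n + 1) = x ^ n * x := by ring
            _ ≤ x ^ n * 1 := by nlinarith [pow_nonneg hx0 n]
            _ = x ^ n := by ring
  have hprod := tsum_mul_tsum_eq_tsum_sum_range_of_summable_norm hg' hl'
  rw [hgeo.tsum_eq, hlog.tsum_eq] at hprod
  have hcoeff : ∀ n : ℕ,
      (∑ k ∈ Finset.range (n + 1),
        (-x) ^ k * -((-x) ^ (n - k + 1) / (((n - k : ℕ) : ℝ) + 1)))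
      = (-1) ^ n * Hnum (n + 1) * x ^ (n + 1) := by
    intro n
    have h1 : ∀ k ∈ Finset.range (n + 1),
        (-x) ^ k * -((-x) ^ (n - k + 1) / (((n - k : ℕ) : ℝ) + 1))
          = (-1) ^ n * x ^ (n + 1) * (1 / (((n - k : ℕ) : ℝ) + 1)) := by
      intro k hk
      rw [Finset.mem_range] at hk
      have hkn : k + (n - k + 1) = n + 1 := by omega
      calc (-x) ^ k * -((-x) ^ (n - k + 1) / (((n - k : ℕ) : ℝ) + 1))
          = -((-x) ^ k * (-x) ^ (n - k + 1)) / (((n - k : ℕ) : ℝ) + 1) := by ring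
        _ = -((-x) ^ (n + 1)) / (((n - k : ℕ) : ℝ) + 1) := by rw [← pow_add, hkn]
        _ = (-1) ^ n * x ^ (n + 1) * (1 / (((n - k : ℕ) : ℝ) + 1)) := by
            rw [neg_pow]; ring
    rw [Finset.sum_congr rfl h1, ← Finset.mul_sum]
    have h2 : ∑ k ∈ Finset.range (n + 1), (1 / (((n - k : ℕ) : ℝ) + 1))
        = Hnum (n + 1) := by
      rw [← Finset.sum_range_reflect]
      unfold Hnum
      apply Finset.sum_congr rfl
      intro k hk
      rw [Finset.mem_range] at hk
      have : n - (n + 1 - 1 - k) = k := by omega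
      rw [this]
    rw [h2]; ring
  have hsum : Summable (fun n : ℕ => (-1) ^ n * Hnum (n + 1) * x ^ (n + 1)) := by
    have hbig0 : Summable (fun n : ℕ => (n:ℝ) ^ 1 * x ^ n) :=
      summable_pow_mul_geometric_of_norm_lt_one 1
        (by rwa [Real.norm_eq_abs, abs_of_nonneg hx0])
    have hbig : Summable (fun n : ℕ => ((n:ℝ) + 1) * x ^ (n + 1)) := by
      have := (summable_nat_add_iff 1).mpr hbig0
      simpa [pow_one] using this
    apply hbig.of_norm_bounded
    intro n
    rw [Real.norm_eq_abs, abs_mul, abs_mul, abs_pow, abs_neg, abs_one, one_pow, one_mul,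
      abs_of_nonneg (Hnum_nonneg _), abs_of_nonneg (pow_nonneg hx0 _)]
    have h3 := Hnum_le (n + 1)
    have hp : (0:ℝ) ≤ x ^ (n + 1) := pow_nonneg hx0 _
    push_cast at h3 ⊢
    nlinarith
  have htsum : ∑' n : ℕ, (-1) ^ n * Hnum (n + 1) * x ^ (n + 1)
      = Real.log (1 + x) / (1 + x) := by
    rw [← tsum_congr hcoeff, ← hprod, div_eq_inv_mul]
  have := hsum.hasSum
  rwa [htsum] at this

lemma hasSum_ff {t : ℝ} (ht : 0 < t) :
    HasSum (fun k : ℕ => ((-1):ℂ) ^ k * (Hnum (k + 1) : ℂ) * Real.exp (-((k : ℝ) + 1) * t))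
      (ff t) := by
  have hx0 : (0:ℝ) ≤ Real.exp (-t) := (Real.exp_pos _).le
  have hx1 : Real.exp (-t) < 1 := by
    calc Real.exp (-t) < Real.exp 0 := Real.exp_lt_exp.2 (by linarith)
      _ = 1 := Real.exp_zero
  have h := hasSum_fr hx0 hx1
  have h2 := Complex.hasSum_ofReal.mpr h
  have hexp : ∀ k : ℕ, (Real.exp (-t)) ^ (k + 1) = Real.exp (-((k : ℝ) + 1) * t) := by
    intro k
    rw [← Real.exp_nat_mul]
    congr 1
    push_cast
    ring
  have hf : (fun k : ℕ => (((-1) ^ k * Hnum (k + 1) * Real.exp (-t) ^ (k + 1) : ℝ) : ℂ))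
      = fun k : ℕ => ((-1):ℂ) ^ k * (Hnum (k + 1) : ℂ) * Real.exp (-((k : ℝ) + 1) * t) := by
    funext k
    rw [← hexp k]
    push_cast
    ring
  rw [hf] at h2
  have hfft : ff t = ((Real.log (1 + Real.exp (-t)) / (1 + Real.exp (-t)) : ℝ) : ℂ) := rfl
  rw [hfft]
  exact h2

/-- Mellin transform of `ff` equals `Γ(s)` times the Dirichlet series, for `re s > 2`. -/
lemma mellin_ff_eq {s : ℂ} (hs : 2 < s.re) :
    mellin ff s = Complex.Gamma s *
      ∑' k : ℕ, (-1) ^ k * (Hnum (k + 1) : ℂ) / ((k : ℂ) + 1) ^ s := by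
  have hs0 : 0 < s.re := by linarith
  set a : ℕ → ℂ := fun k => (-1) ^ k * (Hnum (k + 1) : ℂ) with ha
  set p : ℕ → ℝ := fun k => (k : ℝ) + 1 with hp'
  have hp : ∀ k, a k = 0 ∨ 0 < p k := fun k => Or.inr (by positivity)
  have hF : ∀ t ∈ Set.Ioi (0:ℝ), HasSum (fun k => a k * Real.exp (-p k * t)) (ff t) := by
    intro t ht
    exact hasSum_ff (Set.mem_Ioi.mp ht)
  have h_sum : Summable fun k => ‖a k‖ / (p k) ^ s.re := by
    have hmaj : Summable (fun k : ℕ => ((k : ℝ) + 1) ^ (1 - s.re)) := by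
      have h1 := Real.summable_nat_rpow.mpr (show 1 - s.re < -1 by linarith)
      have h2 := (summable_nat_add_iff 1).mpr h1
      simpa [Nat.cast_add] using h2
    apply hmaj.of_nonneg_of_le
    · intro k
      positivity
    · intro k
      have hnorm : ‖a k‖ = Hnum (k + 1) := by
        rw [ha]
        simp [norm_mul, norm_pow, Complex.norm_real, Real.norm_eq_abs,
          abs_of_nonneg (Hnum_nonneg _)]
      rw [hnorm, hp', Real.rpow_sub (by positivity), Real.rpow_one]
      have h1 : Hnum (k + 1) ≤ (k:ℝ) + 1 := by
        have := Hnum_le (k + 1); push_cast at this; linarith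
      have h2 : (0:ℝ) < ((k:ℝ) + 1) ^ s.re := by positivity
      exact (div_le_div_iff_of_pos_right h2).mpr h1
  have key := hasSum_mellin hp hs0 hF h_sum
  rw [← key.tsum_eq]
  have : (fun k : ℕ => Complex.Gamma s * a k / (p k : ℂ) ^ s)
      = fun k : ℕ => Complex.Gamma s * ((-1) ^ k * (Hnum (k + 1) : ℂ) / ((k : ℂ) + 1) ^ s) := by
    funext k
    rw [ha, hp']
    push_cast
    ring
  rw [this, tsum_mul_left]

end Stmt15Aux

section Leibniz

lemma analyticOnNhd_iteratedDeriv {f : ℂ → ℂ} {U : Set ℂ} (hf : AnalyticOnNhd ℂ f U) (k : ℕ) :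
    AnalyticOnNhd ℂ (iteratedDeriv k f) U := by
  induction k with
  | zero => simpa using hf
  | succ k ih => rw [iteratedDeriv_succ]; exact ih.deriv

lemma leibniz_iteratedDeriv {U : Set ℂ} (hU : IsOpen U) {u v : ℂ → ℂ}
    (hu : AnalyticOnNhd ℂ u U) (hv : AnalyticOnNhd ℂ v U) (n : ℕ) :
    ∀ x ∈ U, iteratedDeriv n (fun y => u y * v y) x
      = ∑ k ∈ Finset.range (n + 1),
          (n.choose k : ℂ) * iteratedDeriv k u x * iteratedDeriv (n - k) v x := by
  induction n with
  | zero => intro x _; simp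
  | succ n ih =>
      intro x hx
      rw [iteratedDeriv_succ]
      have hev : iteratedDeriv n (fun y => u y * v y) =ᶠ[𝓝 x]
          fun y => ∑ k ∈ Finset.range (n + 1),
            (n.choose k : ℂ) * iteratedDeriv k u y * iteratedDeriv (n - k) v y := by
        filter_upwards [hU.mem_nhds hx] with y hy using ih y hy
      rw [hev.deriv_eq]
      have hdu : ∀ k : ℕ, ∀ y ∈ U, DifferentiableAt ℂ (iteratedDeriv k u) y := fun k y hy =>
        ((analyticOnNhd_iteratedDeriv hu k) y hy).differentiableAt
      have hdv : ∀ k : ℕ, ∀ y ∈ U, DifferentiableAt ℂ (iteratedDeriv k v) y := fun k y hy =>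
        ((analyticOnNhd_iteratedDeriv hv k) y hy).differentiableAt
      have hderiv_sum : deriv (fun y => ∑ k ∈ Finset.range (n + 1),
          (n.choose k : ℂ) * iteratedDeriv k u y * iteratedDeriv (n - k) v y) x
          = ∑ k ∈ Finset.range (n + 1), ((n.choose k : ℂ) *
              (iteratedDeriv (k + 1) u x * iteratedDeriv (n - k) v x
                + iteratedDeriv k u x * iteratedDeriv (n - k + 1) v x)) := by
        rw [deriv_fun_sum (fun k _ => by
          apply DifferentiableAt.mul
          · exact (differentiableAt_const _).mul (hdu k x hx)
          · exact hdv (n - k) x hx)]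
        apply Finset.sum_congr rfl
        intro k _
        rw [deriv_fun_mul (c := fun y => (n.choose k : ℂ) * iteratedDeriv k u y)
          ((differentiableAt_const _).mul (hdu k x hx)) (hdv (n - k) x hx),
          deriv_const_mul _ (hdu k x hx)]
        rw [← iteratedDeriv_succ, ← iteratedDeriv_succ]
        ring
      rw [hderiv_sum]
      -- now the binomial recombination
      have expand : ∑ k ∈ Finset.range (n + 1), ((n.choose k : ℂ) *
            (iteratedDeriv (k + 1) u x * iteratedDeriv (n - k) v x
              + iteratedDeriv k u x * iteratedDeriv (n - k + 1) v x))
          = (∑ k ∈ Finset.range (n + 1),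
              (n.choose k : ℂ) * (iteratedDeriv (k + 1) u x * iteratedDeriv (n - k) v x))
            + ∑ k ∈ Finset.range (n + 1),
              (n.choose k : ℂ) * (iteratedDeriv k u x * iteratedDeriv (n + 1 - k) v x) := by
        rw [← Finset.sum_add_distrib]
        apply Finset.sum_congr rfl
        intro k hk
        rw [Finset.mem_range] at hk
        have : n - k + 1 = n + 1 - k := by omega
        rw [this]
        ring
      rw [expand]
      -- RHS: split off the k = 0 term and use Pascal's rule
      have hRHS : ∑ k ∈ Finset.range (n + 2),
            ((n + 1).choose k : ℂ) * iteratedDeriv k u x * iteratedDeriv (n + 1 - k) v x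
          = (∑ k ∈ Finset.range (n + 1),
              ((n + 1).choose (k + 1) : ℂ) * iteratedDeriv (k + 1) u x
                * iteratedDeriv (n - k) v x)
            + iteratedDeriv 0 u x * iteratedDeriv (n + 1) v x := by
        rw [Finset.sum_range_succ' (fun k =>
          ((n + 1).choose k : ℂ) * iteratedDeriv k u x * iteratedDeriv (n + 1 - k) v x) (n + 1)]
        simp only [Nat.choose_zero_right, Nat.cast_one, one_mul, Nat.sub_zero]
        congr 1
        apply Finset.sum_congr rfl
        intro k hk
        have : n + 1 - (k + 1) = n - k := by omega
        rw [this]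
      rw [hRHS]
      have hPascal : ∑ k ∈ Finset.range (n + 1),
            ((n + 1).choose (k + 1) : ℂ) * iteratedDeriv (k + 1) u x
              * iteratedDeriv (n - k) v x
          = (∑ k ∈ Finset.range (n + 1),
              (n.choose k : ℂ) * (iteratedDeriv (k + 1) u x * iteratedDeriv (n - k) v x))
            + ∑ k ∈ Finset.range (n + 1),
              (n.choose (k + 1) : ℂ) * iteratedDeriv (k + 1) u x * iteratedDeriv (n - k) v x := by
        rw [← Finset.sum_add_distrib]
        apply Finset.sum_congr rfl
        intro k _
        rw [Nat.choose_succ_succ]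
        push_cast
        ring
      rw [hPascal]
      have hshift : ∑ k ∈ Finset.range (n + 1),
            (n.choose (k + 1) : ℂ) * iteratedDeriv (k + 1) u x * iteratedDeriv (n - k) v x
            + iteratedDeriv 0 u x * iteratedDeriv (n + 1) v x
          = ∑ k ∈ Finset.range (n + 1),
              (n.choose k : ℂ) * (iteratedDeriv k u x * iteratedDeriv (n + 1 - k) v x) := by
        rw [Finset.sum_range_succ' (fun k =>
          (n.choose k : ℂ) * (iteratedDeriv k u x * iteratedDeriv (n + 1 - k) v x)) n]
        simp only [Nat.choose_zero_right, Nat.cast_one, one_mul, Nat.sub_zero]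
        congr 1
        · rw [Finset.sum_range_succ]
          simp only [Nat.choose_succ_self, Nat.cast_zero, zero_mul, add_zero]
          apply Finset.sum_congr rfl
          intro k hk
          have : n + 1 - (k + 1) = n - k := by omega
          rw [this]
          ring
      rw [← hshift]
      ring

end Leibniz

theorem stmt15 (n : ℕ)
    -- `F` is the analytic continuation of `ζ_{H̃}(s) = ∑ (-1)^{n-1} H_n/n^s` to `Re(s) > 0`,
    -- and `γ_{H̃}(n) = (-1)^n F⁽ⁿ⁾(1)`
    (F : ℂ → ℂ)
    (hFanal : AnalyticOnNhd ℂ F {s : ℂ | 0 < s.re})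
    (hFval : ∀ s : ℂ, 1 < s.re →
      F s = ∑' k : ℕ, (-1) ^ k * (Hnum (k + 1) : ℂ) / ((k : ℂ) + 1) ^ s) :
    (-1) ^ n * iteratedDeriv n F 1
      = (-1) ^ n * ∑ k ∈ Finset.range (n + 1),
          (n.choose k : ℂ) * bconst k * (cconst (n - k) : ℂ) := by
  have hopen : IsOpen {s : ℂ | 0 < s.re} := isOpen_lt continuous_const Complex.continuous_re
  -- the auxiliary function G
  set G : ℂ → ℂ := fun s => (1 / Complex.Gamma s) * mellin Stmt15Aux.ff s with hG
  have hu : AnalyticOnNhd ℂ (fun s : ℂ => 1 / Complex.Gamma s) {s : ℂ | 0 < s.re} := by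
    have hdiff : Differentiable ℂ (fun s : ℂ => 1 / Complex.Gamma s) := by
      simpa [one_div] using Complex.differentiable_one_div_Gamma
    exact hdiff.differentiableOn.analyticOnNhd hopen
  have hv : AnalyticOnNhd ℂ (mellin Stmt15Aux.ff) {s : ℂ | 0 < s.re} := by
    apply DifferentiableOn.analyticOnNhd _ hopen
    intro s hs
    have := (Stmt15Aux.mellin_gg_hasDeriv 0 hs).differentiableAt
    rw [Stmt15Aux.gg_zero] at this
    exact this.differentiableWithinAt
  have hGanal : AnalyticOnNhd ℂ G {s : ℂ | 0 < s.re} := fun s hs =>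
    ((hu s hs).mul (hv s hs))
  -- F and G agree near 3
  have hFGev : F =ᶠ[𝓝 (3:ℂ)] G := by
    have h3 : IsOpen {s : ℂ | 2 < s.re} := isOpen_lt continuous_const Complex.continuous_re
    have h3m : (3:ℂ) ∈ {s : ℂ | 2 < s.re} := by norm_num [Set.mem_setOf_eq]
    filter_upwards [h3.mem_nhds h3m] with s hs
    have hs2 : 2 < s.re := hs
    have hGam : Complex.Gamma s ≠ 0 := Complex.Gamma_ne_zero_of_re_pos (by linarith)
    rw [hFval s (by linarith), hG]
    simp only
    rw [Stmt15Aux.mellin_ff_eq hs2, one_div, ← mul_assoc, inv_mul_cancel₀ hGam, one_mul]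
  -- identity theorem
  have hEq : Set.EqOn F G {s : ℂ | 0 < s.re} :=
    hFanal.eqOn_of_preconnected_of_eventuallyEq hGanal
      (convex_halfSpace_re_gt (0:ℝ)).isPreconnected
      (by norm_num [Set.mem_setOf_eq] : (3:ℂ) ∈ {s : ℂ | 0 < s.re}) hFGev
  have h1mem : (1:ℂ) ∈ {s : ℂ | 0 < s.re} := by norm_num [Set.mem_setOf_eq]
  have hF1 : F =ᶠ[𝓝 (1:ℂ)] G := by
    filter_upwards [hopen.mem_nhds h1mem] with s hs using hEq hs
  rw [hF1.iteratedDeriv_eq n]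
  -- Leibniz formula
  rw [leibniz_iteratedDeriv hopen hu hv n 1 h1mem]
  congr 1
  apply Finset.sum_congr rfl
  intro k _
  congr 1
  -- the Mellin factor at 1
  have hmell : ∀ m : ℕ, iteratedDeriv m (mellin Stmt15Aux.ff) 1 = (cconst m : ℂ) := by
    intro m
    rw [Stmt15Aux.iteratedDeriv_mellin_ff m 1 (by norm_num)]
    unfold mellin
    have hcong : Set.EqOn (fun t : ℝ => (t:ℂ) ^ ((1:ℂ) - 1) • Stmt15Aux.gg m t)
        (fun t : ℝ =>
          ((Real.log (1 + Real.exp (-t)) * Real.log t ^ m / (1 + Real.exp (-t)) : ℝ) : ℂ))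
        (Set.Ioi 0) := by
      intro t _
      simp only [sub_self, Complex.cpow_zero, one_smul, Stmt15Aux.gg, Stmt15Aux.ff,
        Stmt15Aux.fr, Complex.real_smul]
      push_cast
      ring
    rw [setIntegral_congr_fun measurableSet_Ioi hcong]
    rw [show ((cconst m : ℝ) : ℂ) = ∫ x in Set.Ioi (0:ℝ),
      ((Real.log (1 + Real.exp (-x)) * Real.log x ^ m / (1 + Real.exp (-x)) : ℝ) : ℂ)
      from (integral_ofReal).symm]
  rw [hmell (n - k)]
end

section
/- With J(v) = (1/Γ(v)) ∫_0^∞ x^{v−1} e^{−x} log( (1−e^{−x})/x ) / (1 − e^{−x}) dx, one has J(1) = γ(1) + ( γ^2 − ζ(2) )/2, where γ is the Euler–Mascheroni constant, γ(1) is the first Stieltjes constant, and ζ(2) = π^2/6. -/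
open Filter Finset MeasureTheory

section AuxLemmas
open Set Real
lemma aux_integrable_log_exp :
    IntegrableOn (fun x : ℝ => Real.exp (-x) * Real.log x) (Set.Ioi 0) := by
  have h1 : IntegrableOn (fun x : ℝ => Real.exp (-x) * x ^ ((1:ℝ)/2 - 1)) (Set.Ioi 0) :=
    Real.GammaIntegral_convergent (by norm_num)
  have h2 : IntegrableOn (fun x : ℝ => Real.exp (-x) * x ^ ((3:ℝ)/2 - 1)) (Set.Ioi 0) :=
    Real.GammaIntegral_convergent (by norm_num)
  have hmaj : IntegrableOn (fun x : ℝ =>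
      2 * (Real.exp (-x) * x ^ ((1:ℝ)/2 - 1)) + 2 * (Real.exp (-x) * x ^ ((3:ℝ)/2 - 1)))
      (Set.Ioi 0) := ((h1.const_mul 2).add (h2.const_mul 2))
  refine hmaj.mono' ?_ ?_
  · apply ContinuousOn.aestronglyMeasurable ?_ measurableSet_Ioi
    exact ((Real.continuous_exp.comp continuous_neg).continuousOn).mul
      (Real.continuousOn_log.mono (fun x hx => ne_of_gt hx))
  · filter_upwards [ae_restrict_mem measurableSet_Ioi] with x hx
    have hx0 : (0:ℝ) < x := hx
    have hsq : (0:ℝ) < Real.sqrt x := Real.sqrt_pos.mpr hx0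
    have hlog : |Real.log x| ≤ 2 * x ^ (-(1:ℝ)/2) + 2 * x ^ ((1:ℝ)/2) := by
      have hs : Real.log x = 2 * Real.log (Real.sqrt x) := by
        rw [Real.log_sqrt hx0.le]; ring
      rcases le_or_gt 1 x with h1x | h1x
      · have hl0 : 0 ≤ Real.log x := Real.log_nonneg h1x
        rw [abs_of_nonneg hl0]
        have : Real.log (Real.sqrt x) ≤ Real.sqrt x - 1 :=
          Real.log_le_sub_one_of_pos hsq
        have hxr : Real.sqrt x = x ^ ((1:ℝ)/2) := Real.sqrt_eq_rpow x
        nlinarith [Real.rpow_nonneg hx0.le (-(1:ℝ)/2), Real.rpow_nonneg hx0.le ((1:ℝ)/2)]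
      · have hl0 : Real.log x ≤ 0 := Real.log_nonpos hx0.le h1x.le
        rw [abs_of_nonpos hl0]
        have hinv : -Real.log (Real.sqrt x) = Real.log (Real.sqrt x)⁻¹ := (Real.log_inv _).symm
        have : Real.log (Real.sqrt x)⁻¹ ≤ (Real.sqrt x)⁻¹ - 1 :=
          Real.log_le_sub_one_of_pos (by positivity)
        have hxr : (Real.sqrt x)⁻¹ = x ^ (-(1:ℝ)/2) := by
          rw [Real.sqrt_eq_rpow, ← Real.rpow_neg hx0.le]; norm_num
        nlinarith [Real.rpow_nonneg hx0.le (-(1:ℝ)/2), Real.rpow_nonneg hx0.le ((1:ℝ)/2)]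
    have hexp : (0:ℝ) < Real.exp (-x) := Real.exp_pos _
    have e1 : x ^ ((1:ℝ)/2 - 1) = x ^ (-(1:ℝ)/2) := by norm_num
    have e2 : x ^ ((3:ℝ)/2 - 1) = x ^ ((1:ℝ)/2) := by norm_num
    rw [Real.norm_eq_abs, abs_mul, abs_of_pos hexp, e1, e2]
    calc Real.exp (-x) * |Real.log x|
        ≤ Real.exp (-x) * (2 * x ^ (-(1:ℝ)/2) + 2 * x ^ ((1:ℝ)/2)) := by
          exact mul_le_mul_of_nonneg_left hlog hexp.le
      _ = 2 * (Real.exp (-x) * x ^ (-(1:ℝ)/2)) + 2 * (Real.exp (-x) * x ^ ((1:ℝ)/2)) := by ring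

lemma aux_integral_exp_log :
    ∫ x in Set.Ioi (0:ℝ), Real.exp (-x) * Real.log x = -Real.eulerMascheroniConstant := by
  set c : ℝ := ∫ x in Set.Ioi (0:ℝ), Real.exp (-x) * Real.log x with hc
  have hC : HasDerivAt Complex.GammaIntegral
      (∫ t : ℝ in Set.Ioi 0, (t:ℂ) ^ ((1:ℂ) - 1) * (Real.log t * Real.exp (-t))) 1 :=
    Complex.hasDerivAt_GammaIntegral (by norm_num)
  have hval : (∫ t : ℝ in Set.Ioi 0, (t:ℂ) ^ ((1:ℂ) - 1) * (Real.log t * Real.exp (-t))) = (c:ℂ) := by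
    rw [hc]
    refine Eq.trans ?_ (integral_ofReal (𝕜 := ℂ))
    refine setIntegral_congr_fun measurableSet_Ioi (fun t ht => ?_)
    simp only [sub_self, Complex.cpow_zero, one_mul]
    norm_cast
    rw [mul_comm]
    rfl
  rw [hval] at hC
  have hG : HasDerivAt Complex.Gamma (c:ℂ) 1 := by
    refine hC.congr_of_eventuallyEq ?_
    have hopen : IsOpen {s : ℂ | 0 < s.re} := isOpen_lt continuous_const Complex.continuous_re
    filter_upwards [hopen.mem_nhds (by norm_num : (0:ℝ) < (1:ℂ).re)] with s hs
    exact Complex.Gamma_eq_integral hs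
  have hR : HasDerivAt Real.Gamma c 1 := by
    have hG' : HasDerivAt Complex.Gamma (c:ℂ) ((1:ℝ):ℂ) := by
      rw [Complex.ofReal_one]; exact hG
    have := hG'.real_of_complex
    have h2 : HasDerivAt (fun x : ℝ => (Complex.Gamma ↑x).re) c 1 := by simpa [Real.Gamma] using this
    convert h2 using 1
    funext x
    rw [Complex.Gamma_ofReal, Complex.ofReal_re]
  have := hR.unique Real.hasDerivAt_Gamma_one
  linarith [this]

noncomputable def H (n : ℕ) : ℝ := ∑ i ∈ Finset.range n, ((i:ℝ)+1)⁻¹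

lemma H_succ (n : ℕ) : H (n+1) = H n + ((n:ℝ)+1)⁻¹ := Finset.sum_range_succ _ n

lemma H_nonneg (n : ℕ) : 0 ≤ H n := Finset.sum_nonneg fun i _ => by positivity

lemma H_eq (n : ℕ) : H n = (harmonic n : ℝ) := by
  rw [H, harmonic]; push_cast; rfl

lemma aux_expint {k : ℝ} (hk : 0 < k) :
    ∫ x in Set.Ioi (0:ℝ), Real.exp (-(k*x)) = k⁻¹ := by
  have := integral_comp_mul_left_Ioi (fun y => Real.exp (-y)) 0 hk
  simp only [mul_zero, integral_exp_neg_Ioi_zero, smul_eq_mul, mul_one] at this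
  exact this

lemma aux_expint_integrable {k : ℝ} (hk : 0 < k) :
    IntegrableOn (fun x : ℝ => Real.exp (-(k*x))) (Set.Ioi 0) := by
  simpa [neg_mul] using exp_neg_integrableOn_Ioi 0 hk

lemma aux_tendsto_Hdiff (n : ℕ) :
    Tendsto (fun M : ℕ => H (M+n) - H M) atTop (nhds 0) := by
  have hb : ∀ M : ℕ, H (M+n) - H M ≤ (n:ℝ) * ((M:ℝ)+1)⁻¹ := by
    intro M
    have : H (M+n) - H M = ∑ i ∈ Finset.Ico M (M+n), ((i:ℝ)+1)⁻¹ := by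
      rw [H, H, Finset.sum_Ico_eq_sub _ (Nat.le_add_right M n)]
    rw [this]
    calc ∑ i ∈ Finset.Ico M (M+n), ((i:ℝ)+1)⁻¹
        ≤ ∑ _i ∈ Finset.Ico M (M+n), ((M:ℝ)+1)⁻¹ := by
          refine Finset.sum_le_sum fun i hi => ?_
          have := (Finset.mem_Ico.mp hi).1
          have : (M:ℝ) ≤ (i:ℝ) := by exact_mod_cast this
          apply inv_anti₀ (by positivity) (by linarith)
      _ = (n:ℝ) * ((M:ℝ)+1)⁻¹ := by
          rw [Finset.sum_const, Nat.card_Ico]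
          simp [Nat.add_sub_cancel_left]
  have hb0 : ∀ M : ℕ, 0 ≤ H (M+n) - H M := by
    intro M
    have : H M ≤ H (M+n) := by
      rw [H, H]
      exact Finset.sum_le_sum_of_subset_of_nonneg
        (Finset.range_subset_range.mpr (Nat.le_add_right M n)) (fun i _ _ => by positivity)
    linarith
  have hlim : Tendsto (fun M : ℕ => (n:ℝ) * ((M:ℝ)+1)⁻¹) atTop (nhds 0) := by
    have : Tendsto (fun n : ℕ => 1 / ((n : ℝ) + 1)) atTop (nhds 0) := tendsto_one_div_add_atTop_nhds_zero_nat
    simpa using (this.const_mul (n:ℝ))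
  exact squeeze_zero hb0 hb hlim

lemma aux_hasSum_partial_frac {n : ℕ} (hn : 1 ≤ n) :
    HasSum (fun m : ℕ => ((m:ℝ)+1)⁻¹ * (((m:ℝ)+1)+(n:ℝ))⁻¹) (H n / n) := by
  have hnR : (0:ℝ) < (n:ℝ) := by exact_mod_cast hn
  have hterm : ∀ m : ℕ, ((m:ℝ)+1)⁻¹ * (((m:ℝ)+1)+(n:ℝ))⁻¹
      = (n:ℝ)⁻¹ * (((m:ℝ)+1)⁻¹ - (((m:ℝ)+1)+(n:ℝ))⁻¹) := by
    intro m
    have h1 : ((m:ℝ)+1) ≠ 0 := by positivity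
    have h2 : ((m:ℝ)+1)+(n:ℝ) ≠ 0 := by positivity
    field_simp
    ring
  have hpartial : ∀ M : ℕ, ∑ m ∈ Finset.range M, ((m:ℝ)+1)⁻¹ * (((m:ℝ)+1)+(n:ℝ))⁻¹
      = (n:ℝ)⁻¹ * (H M + H n - H (M+n)) := by
    intro M
    induction M with
    | zero => simp [H]
    | succ M ih =>
      rw [Finset.sum_range_succ, ih, hterm M]
      have e1 : H (M+1) = H M + ((M:ℝ)+1)⁻¹ := H_succ M
      have e2 : M+1+n = (M+n)+1 := by omega
      have e3 : H (M+1+n) = H (M+n) + (((M:ℝ)+(n:ℝ))+1)⁻¹ := by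
        rw [e2, H_succ]; push_cast; ring_nf
      rw [e1, e3]
      push_cast
      ring_nf
  rw [(hasSum_iff_tendsto_nat_of_nonneg (fun m => by positivity) _)]
  have : Tendsto (fun M : ℕ => (n:ℝ)⁻¹ * (H M + H n - H (M+n))) atTop (nhds ((n:ℝ)⁻¹ * (H n - 0))) := by
    apply Tendsto.const_mul
    have := aux_tendsto_Hdiff n
    have h2 : Tendsto (fun M : ℕ => H n - (H (M+n) - H M)) atTop (nhds (H n - 0)) :=
      tendsto_const_nhds.sub (aux_tendsto_Hdiff n)
    refine h2.congr fun M => by ring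
  simp only [sub_zero] at this
  rw [div_eq_inv_mul]
  exact this.congr fun M => (hpartial M).symm

lemma aux_log1e_pos {x : ℝ} (hx : 0 < x) : 0 < 1 - Real.exp (-x) := by
  have : Real.exp (-x) < 1 := Real.exp_lt_one_iff.mpr (by linarith)
  linarith

lemma aux_log1e_bounds {x : ℝ} (hx : 0 < x) :
    Real.log x - x ≤ Real.log (1 - Real.exp (-x)) ∧ Real.log (1 - Real.exp (-x)) ≤ 0 := by
  have hpos := aux_log1e_pos hx
  constructor
  · have h1 : x * Real.exp (-x) ≤ 1 - Real.exp (-x) := by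
      have h2 : x + 1 ≤ Real.exp x := Real.add_one_le_exp x
      have h3 : (x + 1) * Real.exp (-x) ≤ Real.exp x * Real.exp (-x) :=
        mul_le_mul_of_nonneg_right h2 (Real.exp_pos _).le
      rw [← Real.exp_add] at h3
      simp only [add_neg_cancel, Real.exp_zero] at h3
      linarith
    have h4 : Real.log (x * Real.exp (-x)) ≤ Real.log (1 - Real.exp (-x)) :=
      Real.log_le_log (by positivity) h1
    rwa [Real.log_mul (ne_of_gt hx) (ne_of_gt (Real.exp_pos _)), Real.log_exp] at h4
  · apply Real.log_nonpos hpos.le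
    have : 0 < Real.exp (-x) := Real.exp_pos _
    linarith

lemma aux_integrable_exp_mul_sq :
    IntegrableOn (fun x : ℝ => Real.exp (-x) * x) (Set.Ioi 0) := by
  have := Real.GammaIntegral_convergent (s := 2) (by norm_num)
  refine this.congr_fun (fun x hx => ?_) measurableSet_Ioi
  have hx0 : (0:ℝ) < x := hx
  rw [show (2:ℝ) - 1 = 1 by norm_num]; simp only [Real.rpow_one]

/-- master dominating function -/
noncomputable def Mst : ℝ → ℝ := fun x =>
  ‖Real.exp (-x) * x‖ + ‖Real.exp (-x) * Real.log x‖

lemma aux_Mst_integrable : IntegrableOn Mst (Set.Ioi 0) :=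
  (aux_integrable_exp_mul_sq.norm).add (aux_integrable_log_exp.norm)

lemma aux_dom_log {k x : ℝ} (hk : 1 ≤ k) (hx : 0 < x) :
    ‖Real.exp (-(k*x)) * Real.log x‖ ≤ Mst x := by
  have hek : Real.exp (-(k*x)) ≤ Real.exp (-x) := by
    apply Real.exp_le_exp.mpr; nlinarith
  have h0 : (0:ℝ) < Real.exp (-(k*x)) := Real.exp_pos _
  rw [Mst, Real.norm_eq_abs, abs_mul, abs_of_pos h0]
  have : Real.exp (-(k*x)) * |Real.log x| ≤ Real.exp (-x) * |Real.log x| :=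
    mul_le_mul_of_nonneg_right hek (abs_nonneg _)
  have h2 : Real.exp (-x) * |Real.log x| = ‖Real.exp (-x) * Real.log x‖ := by
    rw [Real.norm_eq_abs, abs_mul, abs_of_pos (Real.exp_pos _)]
  have h3 : 0 ≤ ‖Real.exp (-x) * x‖ := norm_nonneg _
  linarith

lemma aux_dom_log1e {k x : ℝ} (hk : 1 ≤ k) (hx : 0 < x) :
    ‖Real.exp (-(k*x)) * Real.log (1 - Real.exp (-x))‖ ≤ Mst x := by
  obtain ⟨hlo, hhi⟩ := aux_log1e_bounds hx
  have hek : Real.exp (-(k*x)) ≤ Real.exp (-x) := by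
    apply Real.exp_le_exp.mpr; nlinarith
  have h0 : (0:ℝ) < Real.exp (-(k*x)) := Real.exp_pos _
  rw [Mst, Real.norm_eq_abs, abs_mul, abs_of_pos h0]
  have habs : |Real.log (1 - Real.exp (-x))| ≤ x + |Real.log x| := by
    rw [abs_of_nonpos hhi]
    have : -Real.log x ≤ |Real.log x| := neg_le_abs _
    linarith
  have h1 : Real.exp (-(k*x)) * |Real.log (1 - Real.exp (-x))|
      ≤ Real.exp (-x) * (x + |Real.log x|) := by
    apply mul_le_mul hek habs (abs_nonneg _) (Real.exp_pos _).le
  have h2 : Real.exp (-x) * (x + |Real.log x|) = ‖Real.exp (-x) * x‖ + ‖Real.exp (-x) * Real.log x‖ := by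
    rw [Real.norm_eq_abs, Real.norm_eq_abs, abs_mul, abs_mul, abs_of_pos (Real.exp_pos _),
      abs_of_pos hx]
    ring
  linarith [h2 ▸ h1]

lemma aux_meas_log {k : ℝ} : AEStronglyMeasurable
    (fun x : ℝ => Real.exp (-(k*x)) * Real.log x) (volume.restrict (Set.Ioi 0)) := by
  apply ContinuousOn.aestronglyMeasurable ?_ measurableSet_Ioi
  exact ((Real.continuous_exp.comp (continuous_const.mul continuous_id).neg).continuousOn).mul
    (Real.continuousOn_log.mono (fun x hx => ne_of_gt hx))

lemma aux_meas_log1e {k : ℝ} : AEStronglyMeasurable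
    (fun x : ℝ => Real.exp (-(k*x)) * Real.log (1 - Real.exp (-x))) (volume.restrict (Set.Ioi 0)) := by
  apply ContinuousOn.aestronglyMeasurable ?_ measurableSet_Ioi
  refine ((Real.continuous_exp.comp (continuous_const.mul continuous_id).neg).continuousOn).mul ?_
  apply Real.continuousOn_log.comp
    ((continuous_const.sub (Real.continuous_exp.comp continuous_neg)).continuousOn)
  intro x hx
  exact ne_of_gt (aux_log1e_pos hx)

lemma aux_integrable_exp_log {k : ℝ} (hk : 1 ≤ k) :
    IntegrableOn (fun x : ℝ => Real.exp (-(k*x)) * Real.log x) (Set.Ioi 0) := by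
  refine aux_Mst_integrable.mono' aux_meas_log ?_
  filter_upwards [ae_restrict_mem measurableSet_Ioi] with x hx
  exact aux_dom_log hk hx

lemma aux_integrable_exp_log1e {k : ℝ} (hk : 1 ≤ k) :
    IntegrableOn (fun x : ℝ => Real.exp (-(k*x)) * Real.log (1 - Real.exp (-x))) (Set.Ioi 0) := by
  refine aux_Mst_integrable.mono' aux_meas_log1e ?_
  filter_upwards [ae_restrict_mem measurableSet_Ioi] with x hx
  exact aux_dom_log1e hk hx

lemma aux_integral_exp_log_n {n : ℕ} (hn : 1 ≤ n) :
    ∫ x in Set.Ioi (0:ℝ), Real.exp (-((n:ℝ)*x)) * Real.log x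
      = -(Real.eulerMascheroniConstant + Real.log n) / n := by
  have hnR : (0:ℝ) < (n:ℝ) := by exact_mod_cast hn
  set g : ℝ → ℝ := fun y => Real.exp (-y) * (Real.log y - Real.log n) with hg
  have h1 : ∫ x in Set.Ioi (0:ℝ), Real.exp (-((n:ℝ)*x)) * Real.log x
      = ∫ x in Set.Ioi (0:ℝ), g ((n:ℝ)*x) := by
    refine setIntegral_congr_fun measurableSet_Ioi (fun x hx => ?_)
    have hx0 : (0:ℝ) < x := hx
    simp only [hg]
    rw [Real.log_mul (ne_of_gt hnR) (ne_of_gt hx0)]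
    ring
  have h2 := integral_comp_mul_left_Ioi g 0 hnR
  have h3 : ∫ y in Set.Ioi (0:ℝ), g y
      = -Real.eulerMascheroniConstant - Real.log n := by
    have hint1 := aux_integrable_log_exp
    have hint2 : IntegrableOn (fun y : ℝ => Real.exp (-y) * Real.log n) (Set.Ioi 0) := by
      have := (aux_expint_integrable one_pos).mul_const (Real.log n)
      simpa [neg_mul, IntegrableOn] using this
    have : ∫ y in Set.Ioi (0:ℝ), g y
        = (∫ y in Set.Ioi (0:ℝ), Real.exp (-y) * Real.log y)
          - ∫ y in Set.Ioi (0:ℝ), Real.exp (-y) * Real.log n := by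
      rw [← integral_sub hint1 hint2]
      refine setIntegral_congr_fun measurableSet_Ioi (fun y hy => by simp [hg]; ring)
    rw [this, aux_integral_exp_log]
    have : ∫ y in Set.Ioi (0:ℝ), Real.exp (-y) * Real.log n
        = (∫ y in Set.Ioi (0:ℝ), Real.exp (-y)) * Real.log n := by
      rw [integral_mul_const]
    rw [this]
    have h4 : ∫ y in Set.Ioi (0:ℝ), Real.exp (-y) = 1 := by
      simpa using aux_expint one_pos
    rw [h4]; ring
  rw [h1, h2] at *
  rw [mul_zero] at h2 ⊢
  rw [h3] at h2 ⊢
  rw [h2]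
  simp only [smul_eq_mul]
  field_simp
  ring


lemma aux_summable_sq : Summable (fun m : ℕ => (((m:ℝ)+1) * ((m:ℝ)+1))⁻¹) := by
  have h := summable_one_div_nat_pow (p := 2) |>.mpr Nat.one_lt_two
  have h2 := (summable_nat_add_iff (f := fun n : ℕ => 1/(n:ℝ)^2) 1).mpr h
  refine h2.congr fun m => ?_
  push_cast
  rw [one_div, sq]

lemma aux_integral_exp_log1e' {n : ℕ} (hn : 1 ≤ n) :
    ∫ x in Set.Ioi (0:ℝ), Real.exp (-((n:ℝ)*x)) * Real.log (1 - Real.exp (-x))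
      = -(H n) / n := by
  have hnR : (0:ℝ) < (n:ℝ) := by exact_mod_cast hn
  set f : ℕ → ℝ → ℝ := fun m x => Real.exp (-(((n:ℝ)+(m:ℝ)+1)*x)) / ((m:ℝ)+1) with hf
  have hkpos : ∀ m : ℕ, (0:ℝ) < (n:ℝ)+(m:ℝ)+1 := fun m => by positivity
  have hint : ∀ m : ℕ, IntegrableOn (f m) (Set.Ioi 0) := fun m =>
    (aux_expint_integrable (hkpos m)).div_const _
  have hval : ∀ m : ℕ, ∫ x in Set.Ioi (0:ℝ), f m x
      = ((m:ℝ)+1)⁻¹ * (((m:ℝ)+1)+(n:ℝ))⁻¹ := by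
    intro m
    rw [hf]
    simp only
    rw [integral_div, aux_expint (hkpos m)]
    rw [show (n:ℝ)+(m:ℝ)+1 = ((m:ℝ)+1)+(n:ℝ) by ring]
    rw [div_eq_mul_inv]
    ring
  have hnonneg : ∀ m : ℕ, ∀ x : ℝ, 0 ≤ f m x := fun m x => by
    rw [hf]; positivity
  have hmeas : ∀ m : ℕ, AEStronglyMeasurable (f m) (volume.restrict (Set.Ioi 0)) := by
    intro m
    exact ((Real.continuous_exp.comp (continuous_const.mul continuous_id).neg).div_const
      _).aestronglyMeasurable
  have hsummable : Summable (fun m : ℕ => ((m:ℝ)+1)⁻¹ * (((m:ℝ)+1)+(n:ℝ))⁻¹) :=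
    (aux_hasSum_partial_frac hn).summable
  have hf' : ∑' m : ℕ, ∫⁻ x, ‖f m x‖ₑ ∂(volume.restrict (Set.Ioi 0)) ≠ ⊤ := by
    have heq : ∀ m : ℕ, ∫⁻ x, ‖f m x‖ₑ ∂(volume.restrict (Set.Ioi 0))
        = ENNReal.ofReal (((m:ℝ)+1)⁻¹ * (((m:ℝ)+1)+(n:ℝ))⁻¹) := by
      intro m
      rw [← ofReal_integral_norm_eq_lintegral_enorm (hint m)]
      congr 1
      rw [← hval m]
      refine integral_congr_ae (Eventually.of_forall fun x => ?_)
      exact Real.norm_of_nonneg (hnonneg m x)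
    simp_rw [heq]
    rw [← ENNReal.ofReal_tsum_of_nonneg (fun m => by positivity) hsummable]
    exact ENNReal.ofReal_ne_top
  have hinterchange := integral_tsum hmeas hf'
  have hpt : ∀ x ∈ Set.Ioi (0:ℝ),
      Real.exp (-((n:ℝ)*x)) * Real.log (1 - Real.exp (-x)) = -∑' m, f m x := by
    intro x hx
    have hx0 : (0:ℝ) < x := hx
    have habs : |Real.exp (-x)| < 1 := by
      rw [abs_of_pos (Real.exp_pos _)]
      exact Real.exp_lt_one_iff.mpr (by linarith)
    have hgeom := hasSum_pow_div_log_of_abs_lt_one habs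
    have hmul := hgeom.mul_left (Real.exp (-((n:ℝ)*x)))
    have heqf : (fun m : ℕ => Real.exp (-((n:ℝ)*x)) * (Real.exp (-x) ^ (m+1) / ((m:ℝ)+1)))
        = fun m => f m x := by
      funext m
      rw [hf]
      simp only
      rw [← Real.exp_nat_mul, ← mul_div_assoc, ← Real.exp_add]
      congr 2
      push_cast
      ring
    rw [heqf] at hmul
    rw [hmul.tsum_eq]
    ring
  calc ∫ x in Set.Ioi (0:ℝ), Real.exp (-((n:ℝ)*x)) * Real.log (1 - Real.exp (-x))
      = ∫ x in Set.Ioi (0:ℝ), -∑' m, f m x := setIntegral_congr_fun measurableSet_Ioi hpt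
    _ = -(∫ x in Set.Ioi (0:ℝ), ∑' m, f m x) := integral_neg _
    _ = -∑' m, ∫ x in Set.Ioi (0:ℝ), f m x := by rw [hinterchange]
    _ = -∑' m : ℕ, ((m:ℝ)+1)⁻¹ * (((m:ℝ)+1)+(n:ℝ))⁻¹ := by
        congr 1; exact tsum_congr hval
    _ = -(H n) / n := by
        rw [(aux_hasSum_partial_frac hn).tsum_eq, neg_div]


lemma aux_eps_bounds {n : ℕ} (hn : 1 ≤ n) :
    0 ≤ H n - Real.log n - Real.eulerMascheroniConstant ∧
    H n - Real.log n - Real.eulerMascheroniConstant ≤ ((n:ℝ))⁻¹ := by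
  have hnR : (0:ℝ) < (n:ℝ) := by exact_mod_cast hn
  have h1 : Real.eulerMascheroniConstant < (harmonic n : ℝ) - Real.log n := by
    have := Real.eulerMascheroniConstant_lt_eulerMascheroniSeq' n
    rwa [Real.eulerMascheroniSeq', if_neg (by omega)] at this
  have h2 : (harmonic n : ℝ) - Real.log (n+1) < Real.eulerMascheroniConstant := by
    have := Real.eulerMascheroniSeq_lt_eulerMascheroniConstant n
    rwa [Real.eulerMascheroniSeq] at this
  have h3 : Real.log ((n:ℝ)+1) - Real.log n ≤ ((n:ℝ))⁻¹ := by
    have h4 : Real.log (((n:ℝ)+1)/(n:ℝ)) ≤ ((n:ℝ)+1)/(n:ℝ) - 1 :=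
      Real.log_le_sub_one_of_pos (by positivity)
    rw [Real.log_div (by positivity) (ne_of_gt hnR)] at h4
    have : ((n:ℝ)+1)/(n:ℝ) - 1 = ((n:ℝ))⁻¹ := by field_simp; ring
    linarith
  rw [H_eq]
  constructor <;> push_cast at * <;> linarith

lemma aux_sum_H_div (N : ℕ) :
    ∑ k ∈ Finset.range N, H (k+1) * ((k:ℝ)+1)⁻¹
      = (H N ^ 2 + ∑ k ∈ Finset.range N, (((k:ℝ)+1) * ((k:ℝ)+1))⁻¹) / 2 := by
  induction N with
  | zero => simp [H]
  | succ N ih =>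
    rw [Finset.sum_range_succ, ih, Finset.sum_range_succ, H_succ]
    have hpos : ((N:ℝ)+1) ≠ 0 := by positivity
    field_simp
    ring


lemma aux_limit (γ1 : ℝ)
    (hγ1 : Tendsto
      (fun N : ℕ =>
        (∑ k ∈ Finset.Icc 1 N, Real.log (k : ℝ) / (k : ℝ)) - Real.log (N : ℝ) ^ 2 / 2)
      atTop (nhds γ1)) :
    Tendsto (fun N : ℕ => ∑ k ∈ Finset.range N,
        (Real.eulerMascheroniConstant + Real.log ((k:ℝ)+1) - H (k+1)) * ((k:ℝ)+1)⁻¹)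
      atTop (nhds (γ1 + (Real.eulerMascheroniConstant ^ 2 - Real.pi ^ 2 / 6) / 2)) := by
  set γ := Real.eulerMascheroniConstant with hγ
  set L : ℕ → ℝ := fun N => ∑ k ∈ Finset.range N, Real.log ((k:ℝ)+1) * ((k:ℝ)+1)⁻¹ with hL
  set P : ℕ → ℝ := fun N => ∑ k ∈ Finset.range N, (((k:ℝ)+1) * ((k:ℝ)+1))⁻¹ with hP
  set ε : ℕ → ℝ := fun N => H N - Real.log N - γ with hε
  have hsum : ∀ N : ℕ, ∑ k ∈ Finset.range N,
      (γ + Real.log ((k:ℝ)+1) - H (k+1)) * ((k:ℝ)+1)⁻¹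
      = γ * H N + L N - (H N ^ 2 + P N) / 2 := by
    intro N
    rw [← aux_sum_H_div N, hL]
    simp only
    rw [H, Finset.mul_sum, ← Finset.sum_add_distrib, ← Finset.sum_sub_distrib]
    refine Finset.sum_congr rfl fun k _ => ?_
    ring
  have heps : Tendsto ε atTop (nhds 0) := by
    have h1 : Tendsto (fun n : ℕ => (harmonic n : ℝ) - Real.log n) atTop (nhds γ) :=
      Real.tendsto_harmonic_sub_log
    have h2 : Tendsto (fun n : ℕ => H n - Real.log n) atTop (nhds γ) := by
      refine h1.congr fun n => by rw [H_eq]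
    have := h2.sub (tendsto_const_nhds (x := γ))
    simpa using this
  have hlogdiv : Tendsto (fun N : ℕ => Real.log N / (N:ℝ)) atTop (nhds 0) := by
    have h := Real.isLittleO_log_id_atTop.tendsto_div_nhds_zero
    exact h.comp tendsto_natCast_atTop_atTop
  have hlogeps : Tendsto (fun N : ℕ => Real.log N * ε N) atTop (nhds 0) := by
    apply squeeze_zero' (g := fun N : ℕ => Real.log N / (N:ℝ))
    · filter_upwards [eventually_ge_atTop 1] with N hN
      have h1 : (0:ℝ) ≤ Real.log N := Real.log_nonneg (by exact_mod_cast hN)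
      exact mul_nonneg h1 (aux_eps_bounds hN).1
    · filter_upwards [eventually_ge_atTop 1] with N hN
      have h1 : (0:ℝ) ≤ Real.log N := Real.log_nonneg (by exact_mod_cast hN)
      have h2 := (aux_eps_bounds hN).2
      rw [div_eq_mul_inv]
      exact mul_le_mul_of_nonneg_left h2 h1
    · exact hlogdiv
  have hc1 : Tendsto (fun N : ℕ => L N - Real.log N ^ 2 / 2) atTop (nhds γ1) := by
    refine hγ1.congr fun N => ?_
    congr 1
    rw [show Finset.Icc 1 N = Finset.Ico 1 (N+1) by rfl, Finset.sum_Ico_eq_sum_range]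
    simp only [Nat.add_sub_cancel]
    refine Finset.sum_congr rfl fun k _ => ?_
    push_cast
    rw [div_eq_mul_inv, add_comm (1:ℝ) (k:ℝ)]
  have hc4 : Tendsto P atTop (nhds (Real.pi ^ 2 / 6)) := by
    have h0 : HasSum (fun n : ℕ => (1:ℝ) / ((n:ℝ)+1) ^ 2) (Real.pi ^ 2 / 6) := by
      have := (hasSum_nat_add_iff (f := fun n : ℕ => (1:ℝ) / (n:ℝ)^2) 1).mpr
        (by simpa using hasSum_zeta_two)
      refine this.congr_fun fun n => by push_cast; ring_nf
    have h1 : HasSum (fun n : ℕ => (((n:ℝ)+1) * ((n:ℝ)+1))⁻¹) (Real.pi ^ 2 / 6) := by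
      refine h0.congr_fun fun n => by rw [one_div, sq]
    exact h1.tendsto_sum_nat
  have hmid : ∀ N : ℕ, γ * H N + L N - (H N ^ 2 + P N) / 2
      = (L N - Real.log N ^ 2 / 2) + (γ^2/2 - ε N ^2/2 - Real.log N * ε N) - P N / 2 := by
    intro N
    rw [hε]
    simp only
    ring
  have hc2 : Tendsto (fun N : ℕ => γ^2/2 - ε N ^2/2 - Real.log N * ε N) atTop
      (nhds (γ^2/2 - 0 - 0)) := by
    refine Tendsto.sub (Tendsto.sub tendsto_const_nhds ?_) hlogeps
    have := (heps.mul heps).div_const 2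
    simpa [sq] using this
  have htot := ((hc1.add hc2).sub (hc4.div_const 2))
  have hfin : γ1 + (γ ^ 2 - Real.pi ^ 2 / 6) / 2 = γ1 + (γ^2/2 - 0 - 0) - Real.pi^2/6/2 := by ring
  rw [hfin]
  exact htot.congr fun N => ((hsum N).trans (hmid N)).symm

end AuxLemmas

/-- `J(v) = (1/Γ(v)) ∫_0^∞ x^{v-1} e^{-x} log((1-e^{-x})/x) / (1-e^{-x}) dx`. -/
noncomputable def Jfun (v : ℝ) : ℝ :=
  (1 / Real.Gamma v) * ∫ x in Set.Ioi (0 : ℝ),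
    x ^ (v - 1) * Real.exp (-x) * Real.log ((1 - Real.exp (-x)) / x) / (1 - Real.exp (-x))

section Main
open Set Real


theorem stmt16 (γ1 : ℝ)
    -- the first Stieltjes constant `γ(1)`
    (hγ1 : Tendsto
      (fun N : ℕ =>
        (∑ k ∈ Finset.Icc 1 N, Real.log (k : ℝ) / (k : ℝ)) - Real.log (N : ℝ) ^ 2 / 2)
      atTop (nhds γ1)) :
    Jfun 1 = γ1 + (Real.eulerMascheroniConstant ^ 2 - Real.pi ^ 2 / 6) / 2 := by
  set γ := Real.eulerMascheroniConstant with hγ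
  set g : ℕ → ℝ → ℝ := fun k x =>
    Real.exp (-(((k:ℝ)+1)*x)) * (Real.log (1 - Real.exp (-x)) - Real.log x) with hg
  set e : ℕ → ℝ := fun k => (γ + Real.log ((k:ℝ)+1) - H (k+1)) * ((k:ℝ)+1)⁻¹ with he
  have hk1 : ∀ k : ℕ, (1:ℝ) ≤ (k:ℝ)+1 := fun k => by
    have : (0:ℝ) ≤ (k:ℝ) := Nat.cast_nonneg k
    linarith
  have hkpos : ∀ k : ℕ, (0:ℝ) < (k:ℝ)+1 := fun k => by positivity
  -- integrability of each g k
  have hintg : ∀ k : ℕ, IntegrableOn (g k) (Set.Ioi 0) := by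
    intro k
    have h0 : IntegrableOn (fun x : ℝ =>
        Real.exp (-(((k:ℝ)+1)*x)) * Real.log (1 - Real.exp (-x))
        - Real.exp (-(((k:ℝ)+1)*x)) * Real.log x) (Set.Ioi 0) :=
      (aux_integrable_exp_log1e (hk1 k)).sub (aux_integrable_exp_log (hk1 k))
    refine h0.congr_fun (fun x _ => ?_) measurableSet_Ioi
    simp only [hg]; ring
  -- value of each integral
  have hvalg : ∀ k : ℕ, ∫ x in Set.Ioi (0:ℝ), g k x = e k := by
    intro k
    have h1 := aux_integral_exp_log1e' (n := k+1) (by omega)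
    have h2 := aux_integral_exp_log_n (n := k+1) (by omega)
    push_cast at h1 h2
    have hsplit : ∫ x in Set.Ioi (0:ℝ), g k x
        = (∫ x in Set.Ioi (0:ℝ), Real.exp (-(((k:ℝ)+1)*x)) * Real.log (1 - Real.exp (-x)))
          - ∫ x in Set.Ioi (0:ℝ), Real.exp (-(((k:ℝ)+1)*x)) * Real.log x := by
      rw [← integral_sub (aux_integrable_exp_log1e (hk1 k)) (aux_integrable_exp_log (hk1 k))]
      refine setIntegral_congr_fun measurableSet_Ioi (fun x _ => ?_)
      simp only [hg]; ring
    rw [hsplit, h1, h2, he]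
    simp only
    field_simp
    ring
  -- sign of g k on Ioi 0
  have hsign : ∀ k : ℕ, ∀ x : ℝ, x ∈ Set.Ioi (0:ℝ) → g k x ≤ 0 := by
    intro k x hx
    have hx0 : (0:ℝ) < x := hx
    have hpos := aux_log1e_pos hx0
    have hle : 1 - Real.exp (-x) ≤ x := by
      have := Real.add_one_le_exp (-x)
      linarith
    have hlog : Real.log (1 - Real.exp (-x)) ≤ Real.log x := Real.log_le_log hpos hle
    simp only [hg]
    apply mul_nonpos_of_nonneg_of_nonpos (Real.exp_pos _).le
    linarith
  -- summability of b k = -e k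
  have hbnds : ∀ k : ℕ, 0 ≤ -e k ∧ -e k ≤ (((k:ℝ)+1) * ((k:ℝ)+1))⁻¹ := by
    intro k
    have h := aux_eps_bounds (n := k+1) (by omega)
    push_cast at h
    obtain ⟨h1, h2⟩ := h
    have h4 : -e k = (H (k+1) - Real.log ((k:ℝ)+1) - γ) * ((k:ℝ)+1)⁻¹ := by
      simp only [he]; ring
    constructor
    · rw [h4]
      exact mul_nonneg (by linarith) (inv_nonneg.mpr (hkpos k).le)
    · rw [h4, mul_inv]
      exact mul_le_mul_of_nonneg_right h2 (inv_nonneg.mpr (hkpos k).le)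
  have hsummB : Summable (fun k : ℕ => -e k) :=
    Summable.of_nonneg_of_le (fun k => (hbnds k).1) (fun k => (hbnds k).2) aux_summable_sq
  have hsummE : Summable e := by
    have := hsummB.neg
    simpa using this
  have hmeasg : ∀ k : ℕ, AEStronglyMeasurable (g k) (volume.restrict (Set.Ioi 0)) :=
    fun k => (hintg k).aestronglyMeasurable
  have hnormval : ∀ k : ℕ, ∫⁻ x, ‖g k x‖ₑ ∂(volume.restrict (Set.Ioi 0))
      = ENNReal.ofReal (-e k) := by
    intro k
    rw [← ofReal_integral_norm_eq_lintegral_enorm (hintg k)]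
    congr 1
    have h5 : ∫ x in Set.Ioi (0:ℝ), ‖g k x‖ = ∫ x in Set.Ioi (0:ℝ), -(g k x) :=
      setIntegral_congr_fun measurableSet_Ioi fun x hx => by
        rw [Real.norm_eq_abs, abs_of_nonpos (hsign k x hx)]
    rw [h5, integral_neg, hvalg k]
  have hf' : ∑' k : ℕ, ∫⁻ x, ‖g k x‖ₑ ∂(volume.restrict (Set.Ioi 0)) ≠ ⊤ := by
    simp_rw [hnormval]
    rw [← ENNReal.ofReal_tsum_of_nonneg (fun k => (hbnds k).1) hsummB]
    exact ENNReal.ofReal_ne_top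
  have hinter := integral_tsum hmeasg hf'
  have hpt : ∀ x ∈ Set.Ioi (0:ℝ),
      x ^ ((1:ℝ)-1) * Real.exp (-x) * Real.log ((1 - Real.exp (-x))/x) / (1 - Real.exp (-x))
        = ∑' k : ℕ, g k x := by
    intro x hx
    have hx0 : (0:ℝ) < x := hx
    have hpos := aux_log1e_pos hx0
    have hr : Real.exp (-x) < 1 := Real.exp_lt_one_iff.mpr (by linarith)
    have hgeo := hasSum_geometric_of_lt_one (Real.exp_pos (-x)).le hr
    have h2 := (hgeo.mul_left (Real.exp (-x))).mul_right
      (Real.log (1 - Real.exp (-x)) - Real.log x)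
    have heqf : (fun k : ℕ => Real.exp (-x) * Real.exp (-x) ^ k
        * (Real.log (1 - Real.exp (-x)) - Real.log x)) = fun k => g k x := by
      funext k
      simp only [hg]
      congr 1
      rw [← pow_succ', ← Real.exp_nat_mul]
      congr 1
      push_cast
      ring
    rw [heqf] at h2
    rw [h2.tsum_eq]
    rw [show (1:ℝ) - 1 = 0 by norm_num, Real.rpow_zero, one_mul,
      Real.log_div (ne_of_gt hpos) (ne_of_gt hx0)]
    field_simp
  have hJ : Jfun 1 = ∑' k : ℕ, e k := by
    rw [Jfun, Real.Gamma_one, div_one, one_mul]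
    rw [setIntegral_congr_fun measurableSet_Ioi hpt, hinter]
    exact tsum_congr hvalg
  rw [hJ]
  have hlim1 := hsummE.hasSum.tendsto_sum_nat
  have hlim2 := aux_limit γ1 hγ1
  refine tendsto_nhds_unique hlim1 (hlim2.congr fun N => ?_)
  exact Finset.sum_congr rfl fun k _ => by rw [he]

end Main
end

section
/- For every complex x and every complex z with 0 < |z| < 2π, ( z e^{xz}/(e^z − 1) ) · L(z) = Σ_{n=1}^∞ A_n(x) z^n with A_n(x) = (1/n!) Σ_{k=1}^n C(n,k) (1/k) B_{n−k}(x) B_k(1), where L(z) denotes the unique function analytic on |z| < 2π with L(0) = 0 satisfying e^{L(z)} = (e^z − 1)/z, and the series converges. -/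
open Filter Finset MeasureTheory

namespace Stmt18aux

open scoped NNReal ENNReal

noncomputable def psc (c : ℕ → ℂ) : FormalMultilinearSeries ℂ ℂ ℂ :=
  fun n => c n • ContinuousMultilinearMap.mkPiAlgebraFin ℂ n ℂ

lemma psc_apply (c : ℕ → ℂ) (n : ℕ) (w : ℂ) :
    (psc c n) (fun _ => w) = c n * w ^ n := by
  simp [psc, List.prod_ofFn]

lemma psc_norm (c : ℕ → ℂ) (n : ℕ) : ‖psc c n‖ = ‖c n‖ := by
  simp only [psc]
  rw [norm_smul (α := ℂ) (β := ContinuousMultilinearMap ℂ (fun _ : Fin n => ℂ) ℂ) (c n),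
    ContinuousMultilinearMap.norm_mkPiAlgebraFin, mul_one]

lemma psc_coeff (c : ℕ → ℂ) (n : ℕ) : (psc c).coeff n = c n := by
  calc (psc c).coeff n = psc c n (fun _ => 1) := rfl
    _ = c n * 1 ^ n := psc_apply c n 1
    _ = c n := by rw [one_pow, mul_one]

def RepOn (c : ℕ → ℂ) (f : ℂ → ℂ) (r : ℝ≥0) : Prop :=
  HasFPowerSeriesOnBall f (psc c) 0 r

lemma repOn_mk {c : ℕ → ℂ} {f : ℂ → ℂ} {r : ℝ≥0} (hr : 0 < r)
    (hsum : Summable fun n => ‖c n‖ * (r : ℝ) ^ n)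
    (h : ∀ w : ℂ, ‖w‖ < r → HasSum (fun n => c n * w ^ n) (f w)) :
    RepOn c f r := by
  refine ⟨?_, by exact_mod_cast hr, ?_⟩
  · apply FormalMultilinearSeries.le_radius_of_summable
    simpa only [psc_norm] using hsum
  · intro y hy
    rw [mem_emetric_ball_zero_iff] at hy
    have hy' : ‖y‖ < r := by exact_mod_cast hy
    simpa only [psc_apply, zero_add] using h y hy'

lemma RepOn.hasSumAt {c : ℕ → ℂ} {f : ℂ → ℂ} {r : ℝ≥0} (h : RepOn c f r) {w : ℂ}
    (hw : ‖w‖ < r) : HasSum (fun n => c n * w ^ n) (f w) := by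
  have hw' : w ∈ Metric.eball (0 : ℂ) r := by
    rw [mem_emetric_ball_zero_iff]; exact_mod_cast hw
  simpa only [psc_apply, zero_add] using h.hasSum hw'

lemma RepOn.sumNorm {c : ℕ → ℂ} {f : ℂ → ℂ} {r : ℝ≥0} (h : RepOn c f r) {r' : ℝ≥0}
    (h' : r' < r) : Summable fun n => ‖c n‖ * (r' : ℝ) ^ n := by
  have hlt : (r' : ℝ≥0∞) < (psc c).radius :=
    lt_of_lt_of_le (by exact_mod_cast h') h.r_le
  simpa only [psc_norm] using (psc c).summable_norm_mul_pow hlt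

lemma RepOn.unique {c d : ℕ → ℂ} {f : ℂ → ℂ} {r r' : ℝ≥0} (h1 : RepOn c f r)
    (h2 : RepOn d f r') : c = d := by
  have h := h1.hasFPowerSeriesAt.eq_formalMultilinearSeries h2.hasFPowerSeriesAt
  funext n
  have h3 := congrArg (fun q : FormalMultilinearSeries ℂ ℂ ℂ => q.coeff n) h
  simpa only [psc_coeff] using h3

lemma RepOn.congr {c : ℕ → ℂ} {f g : ℂ → ℂ} {r : ℝ≥0} (h : RepOn c f r)
    (hfg : ∀ w : ℂ, ‖w‖ < r → f w = g w) : RepOn c g r := by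
  refine ⟨h.r_le, h.r_pos, fun {y} hy => ?_⟩
  have hy' : ‖y‖ < r := by
    rw [mem_emetric_ball_zero_iff] at hy; exact_mod_cast hy
  have h2 := h.hasSum hy
  rw [zero_add] at h2 ⊢
  rwa [hfg y hy'] at h2

lemma RepOn.coeff_zero {c : ℕ → ℂ} {f : ℂ → ℂ} {r : ℝ≥0} (h : RepOn c f r) : c 0 = f 0 := by
  have hr : (0 : ℝ) < r := by exact_mod_cast h.r_pos
  have h1 := h.hasSumAt (w := 0) (by simpa using hr)
  have h2 : HasSum (fun n => c n * (0 : ℂ) ^ n) (c 0 * (0:ℂ) ^ 0) :=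
    hasSum_single 0 (fun b hb => by simp [zero_pow hb])
  have := h2.unique h1
  simpa using this

lemma toRep {f : ℂ → ℂ} {p : FormalMultilinearSeries ℂ ℂ ℂ} {r : ℝ≥0}
    (h : HasFPowerSeriesOnBall f p 0 r) : RepOn p.coeff f r := by
  have hn : ∀ n, ‖psc p.coeff n‖ ≤ ‖p n‖ := by
    intro n
    rw [psc_norm]
    calc ‖p.coeff n‖ = ‖p n (fun _ => 1)‖ := rfl
      _ ≤ ‖p n‖ * ∏ _i : Fin n, ‖(1 : ℂ)‖ := (p n).le_opNorm _
      _ = ‖p n‖ := by simp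
  refine ⟨le_trans h.r_le (FormalMultilinearSeries.radius_le_of_le hn), h.r_pos, ?_⟩
  intro y hy
  have h2 := h.hasSum hy
  have he : ∀ n, (psc p.coeff n) (fun _ => y) = p n (fun _ => y) := by
    intro n
    rw [psc_apply, p.apply_eq_pow_smul_coeff, smul_eq_mul, mul_comm]
  simpa [he] using h2

lemma hasSum_mulC {a b : ℕ → ℂ} {A B : ℂ} (ha : HasSum a A) (hb : HasSum b B)
    (ha' : Summable fun n => ‖a n‖) (hb' : Summable fun n => ‖b n‖) :
    HasSum (fun n => ∑ k ∈ range (n + 1), a k * b (n - k)) (A * B) := by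
  have hs := summable_norm_sum_mul_range_of_summable_norm ha' hb'
  have hsum : Summable fun n => ∑ k ∈ range (n + 1), a k * b (n - k) := hs.of_norm
  rw [hsum.hasSum_iff, ← ha.tsum_eq, ← hb.tsum_eq]
  exact (tsum_mul_tsum_eq_tsum_sum_range_of_summable_norm ha' hb').symm

lemma conv_key (c d : ℕ → ℂ) (u : ℂ) (n : ℕ) :
    ∑ k ∈ range (n + 1), (c k * u ^ k) * (d (n - k) * u ^ (n - k)) =
      (∑ k ∈ range (n + 1), c k * d (n - k)) * u ^ n := by
  rw [Finset.sum_mul]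
  refine Finset.sum_congr rfl fun k hk => ?_
  have hk' : k ≤ n := Nat.lt_succ_iff.mp (Finset.mem_range.mp hk)
  calc (c k * u ^ k) * (d (n - k) * u ^ (n - k))
      = c k * d (n - k) * u ^ (k + (n - k)) := by rw [pow_add]; ring
    _ = c k * d (n - k) * u ^ n := by rw [Nat.add_sub_cancel' hk']

lemma RepOn.mul {c d : ℕ → ℂ} {f g : ℂ → ℂ} {r : ℝ≥0} (h1 : RepOn c f r)
    (h2 : RepOn d g r) {r' : ℝ≥0} (hr'0 : 0 < r') (hr' : r' < r) :
    RepOn (fun n => ∑ k ∈ range (n + 1), c k * d (n - k)) (fun w => f w * g w) r' := by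
  refine repOn_mk hr'0 ?_ ?_
  · have hc := h1.sumNorm hr'
    have hd := h2.sumNorm hr'
    have h728 : ∀ (e : ℕ → ℂ) (n : ℕ), ‖e n * ((r' : ℝ) : ℂ) ^ n‖ = ‖e n‖ * (r' : ℝ) ^ n := by
      intro e n
      rw [norm_mul, norm_pow, Complex.norm_real, Real.norm_eq_abs,
        abs_of_nonneg r'.coe_nonneg]
    have hc' : Summable fun n => ‖c n * ((r' : ℝ) : ℂ) ^ n‖ := by
      apply Summable.congr hc; intro n; rw [h728]
    have hd' : Summable fun n => ‖d n * ((r' : ℝ) : ℂ) ^ n‖ := by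
      apply Summable.congr hd; intro n; rw [h728]
    have hs := summable_norm_sum_mul_range_of_summable_norm hc' hd'
    apply Summable.congr hs
    intro n
    rw [conv_key c d _ n, norm_mul, norm_pow, Complex.norm_real, Real.norm_eq_abs,
      abs_of_nonneg r'.coe_nonneg]
  · intro w hw
    have hwr : ‖w‖ < r := lt_trans hw (by exact_mod_cast hr')
    have hwn : (‖w‖₊ : ℝ≥0) < r := by
      rw [← NNReal.coe_lt_coe]; simpa using hwr
    have hca : Summable fun n => ‖c n * w ^ n‖ := by
      apply Summable.congr (h1.sumNorm hwn)
      intro n; rw [norm_mul, norm_pow]; simp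
    have hda : Summable fun n => ‖d n * w ^ n‖ := by
      apply Summable.congr (h2.sumNorm hwn)
      intro n; rw [norm_mul, norm_pow]; simp
    have hh := hasSum_mulC (h1.hasSumAt hwr) (h2.hasSumAt hwr) hca hda
    rwa [show (fun n => ∑ k ∈ range (n+1), (c k * w ^ k) * (d (n-k) * w ^ (n-k)))
      = fun n => (∑ k ∈ range (n+1), c k * d (n-k)) * w ^ n from funext (conv_key c d w)] at hh

lemma RepOn.derivRep {c : ℕ → ℂ} {f : ℂ → ℂ} {r : ℝ≥0} (h : RepOn c f r) {r' : ℝ≥0}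
    (hr'0 : 0 < r') (hlt : r' < r) :
    RepOn (fun m => (m : ℂ) * c m) (fun y => y * deriv f y) r' := by
  refine repOn_mk hr'0 ?_ ?_
  · obtain ⟨ρ, hρ1, hρ2⟩ := exists_between hlt
    have hρpos : (0 : ℝ) < ρ := lt_trans (by exact_mod_cast hr'0) (by exact_mod_cast hρ1)
    obtain ⟨C, hC0, hC⟩ := (psc c).norm_mul_pow_le_of_lt_radius
      (lt_of_lt_of_le (by exact_mod_cast hρ2) h.r_le)
    have hq : |((r' : ℝ) / ρ)| < 1 := by
      rw [abs_of_nonneg (by positivity)]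
      rw [div_lt_one hρpos]
      exact_mod_cast hρ1
    have hgeom : Summable fun n : ℕ => C * ((n : ℝ) ^ 1 * ((r' : ℝ) / ρ) ^ n) :=
      (summable_pow_mul_geometric_of_norm_lt_one 1 (by rwa [Real.norm_eq_abs])).mul_left C
    apply Summable.of_nonneg_of_le (fun n => by positivity) _ hgeom
    intro n
    have hCn := hC n
    rw [psc_norm] at hCn
    have hr'eq : (r' : ℝ) ^ n = ρ ^ n * ((r' : ℝ) / ρ) ^ n := by
      rw [← mul_pow, mul_div_cancel₀ _ (ne_of_gt hρpos)]
    calc ‖(n : ℂ) * c n‖ * (r' : ℝ) ^ n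
        = (n : ℝ) * (‖c n‖ * (ρ : ℝ) ^ n) * ((r' : ℝ) / ρ) ^ n := by
          rw [norm_mul, Complex.norm_natCast, hr'eq]; ring
      _ ≤ (n : ℝ) * C * ((r' : ℝ) / ρ) ^ n := by
          apply mul_le_mul_of_nonneg_right _ (by positivity)
          exact mul_le_mul_of_nonneg_left hCn (by positivity)
      _ = C * ((n : ℝ) ^ 1 * ((r' : ℝ) / ρ) ^ n) := by ring
  · intro w hw
    have hw' : w ∈ Metric.eball (0 : ℂ) r := by
      rw [mem_emetric_ball_zero_iff]
      have : ‖w‖ < r := lt_trans hw (by exact_mod_cast hlt)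
      exact_mod_cast this
    have hd := (h.fderiv).hasSum hw'
    have hev := (ContinuousLinearMap.apply ℂ ℂ w).hasSum hd
    have hterm : ∀ n : ℕ, (ContinuousLinearMap.apply ℂ ℂ w) ((psc c).derivSeries n fun _ => w)
        = ((n : ℂ) + 1) * c (n+1) * w ^ (n+1) := by
      intro n
      rw [ContinuousLinearMap.apply_apply, FormalMultilinearSeries.derivSeries_apply_diag,
        psc_apply]
      push_cast [nsmul_eq_mul]
      ring
    rw [funext hterm] at hev
    simp only [ContinuousLinearMap.apply_apply] at hev
    have hval : (fderiv ℂ f (0 + w)) w = w * deriv f w := by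
      have h1 : (fderiv ℂ f w) w = (fderiv ℂ f w) (w • 1) := by norm_num
      rw [zero_add, h1, ContinuousLinearMap.map_smul, fderiv_apply_one_eq_deriv, smul_eq_mul]
    rw [hval] at hev
    have := (hasSum_nat_add_iff (f := fun m => (m : ℂ) * c m * w ^ m) 1).mp
      (by convert hev using 2 with n; push_cast; ring)
    simpa using this

lemma conv_unique {g u v : ℕ → ℂ} (hg : g 0 ≠ 0)
    (h : ∀ n, ∑ k ∈ range (n + 1), u k * g (n - k) = ∑ k ∈ range (n + 1), v k * g (n - k)) :
    ∀ n, u n = v n := by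
  intro n
  induction n using Nat.strong_induction_on with
  | _ n ih =>
    have hn := h n
    rw [Finset.sum_range_succ, Finset.sum_range_succ] at hn
    have hs : ∑ k ∈ range n, u k * g (n - k) = ∑ k ∈ range n, v k * g (n - k) :=
      Finset.sum_congr rfl fun k hk => by rw [ih k (Finset.mem_range.mp hk)]
    rw [hs] at hn
    have := add_left_cancel hn
    rw [Nat.sub_self] at this
    exact mul_right_cancel₀ hg this

/-! ### Concrete series -/

noncomputable def Gfun : ℂ → ℂ := fun w => if w = 0 then 1 else (Complex.exp w - 1) / w

noncomputable def cG : ℕ → ℂ := fun n => (((n + 1).factorial : ℕ) : ℂ)⁻¹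

lemma cG_zero : cG 0 = 1 := by simp [cG]

lemma hasSum_cexp (w : ℂ) : HasSum (fun n => w ^ n / n.factorial) (Complex.exp w) := by
  rw [Complex.exp_eq_exp_ℂ]
  exact NormedSpace.expSeries_div_hasSum_exp w

lemma hasSum_cexp_sub_one (w : ℂ) :
    HasSum (fun n => w ^ (n + 1) / (n + 1).factorial) (Complex.exp w - 1) := by
  refine (hasSum_nat_add_iff (f := fun n => w ^ n / n.factorial) 1).mpr ?_
  simpa using hasSum_cexp w

lemma repG (r : ℝ≥0) (hr : 0 < r) : RepOn cG Gfun r := by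
  refine repOn_mk hr ?_ ?_
  · apply Summable.of_nonneg_of_le (fun n => by positivity)
      (fun n => ?_) (Real.summable_pow_div_factorial (r : ℝ))
    have h1 : ‖cG n‖ = ((n+1).factorial : ℝ)⁻¹ := by
      simp [cG]
    rw [h1]
    rw [div_eq_mul_inv, mul_comm ((r:ℝ)^n)]
    apply mul_le_mul_of_nonneg_right _ (by positivity)
    rw [inv_le_inv₀ (by positivity) (by positivity)]
    exact_mod_cast Nat.factorial_le (Nat.le_succ n)
  · intro w hw
    by_cases h0 : w = 0
    · subst h0
      have h2 : HasSum (fun n => cG n * (0:ℂ) ^ n) (cG 0 * (0:ℂ) ^ 0) :=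
        hasSum_single 0 (fun b hb => by simp [zero_pow hb])
      simpa [Gfun, cG_zero] using h2
    · have h1 := (hasSum_cexp_sub_one w).div_const w
      have : ∀ n : ℕ, w ^ (n+1) / (n+1).factorial / w = cG n * w ^ n := by
        intro n
        have hc : (((n+1).factorial : ℕ) : ℂ) ≠ 0 :=
          Nat.cast_ne_zero.mpr (Nat.factorial_ne_zero _)
        rw [cG, div_div, inv_mul_eq_div, div_eq_div_iff (mul_ne_zero hc h0) hc]
        ring
      rw [funext this] at h1
      simpa [Gfun, h0] using h1

lemma repE (x : ℂ) (r : ℝ≥0) (hr : 0 < r) :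
    RepOn (fun n => x ^ n / n.factorial) (fun w => Complex.exp (x * w)) r := by
  refine repOn_mk hr ?_ ?_
  · apply Summable.congr (Real.summable_pow_div_factorial (‖x‖ * r))
    intro n
    rw [norm_div, norm_pow, mul_pow, Complex.norm_natCast]
    field_simp
  · intro w hw
    have h1 := hasSum_cexp (x * w)
    have : ∀ n : ℕ, (x * w) ^ n / n.factorial = x ^ n / n.factorial * w ^ n := by
      intro n; rw [mul_pow]; ring
    rwa [funext this] at h1

end Stmt18aux

namespace Stmt18aux

lemma range_succ_eq_insert_Icc (n : ℕ) : range (n + 1) = insert 0 (Finset.Icc 1 n) := by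
  ext a
  simp only [Finset.mem_range, Finset.mem_insert, Finset.mem_Icc]
  omega

lemma aeval_one_bernoulli (k : ℕ) :
    Polynomial.aeval (1 : ℂ) (Polynomial.bernoulli k) = algebraMap ℚ ℂ (bernoulli' k) := by
  rw [← Polynomial.bernoulli_eval_one k, ← map_one (algebraMap ℚ ℂ),
    Polynomial.aeval_algebraMap_apply_eq_algebraMap_eval]

noncomputable def mcoef : ℕ → ℂ := fun k =>
  if k = 0 then 0 else (algebraMap ℚ ℂ (bernoulli' k)) / (k * k.factorial)

lemma hQrat (n : ℕ) (hn : 1 ≤ n) :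
    ∑ k ∈ Finset.Icc 1 n, (bernoulli' k / (k.factorial * (n - k + 1).factorial) : ℚ)
      = n / (n + 1).factorial := by
  have h := sum_bernoulli' (n + 1)
  rw [range_succ_eq_insert_Icc, Finset.sum_insert (by simp)] at h
  simp only [Nat.choose_zero_right, bernoulli'_zero, Nat.cast_one, one_mul, mul_one] at h
  -- h : 1 + ∑ k ∈ Icc 1 n, ((n+1).choose k : ℚ) * bernoulli' k = n + 1
  have h2 : ∑ k ∈ Finset.Icc 1 n, ((n + 1).choose k : ℚ) * bernoulli' k = n := by
    push_cast at h
    linarith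
  have key : ∀ k ∈ Finset.Icc 1 n,
      (bernoulli' k / (k.factorial * (n - k + 1).factorial) : ℚ)
        = ((n + 1).choose k : ℚ) * bernoulli' k / (n + 1).factorial := by
    intro k hk
    obtain ⟨hk1, hk2⟩ := Finset.mem_Icc.mp hk
    have hfac : (((n + 1).choose k : ℕ) : ℚ) * (k.factorial : ℕ) * (((n + 1) - k).factorial : ℕ)
        = (((n + 1).factorial : ℕ) : ℚ) := by
      exact_mod_cast congrArg (fun m : ℕ => (m : ℚ))
        (Nat.choose_mul_factorial_mul_factorial (le_trans hk2 (Nat.le_succ n)))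
    have h3 : n - k + 1 = n + 1 - k := by omega
    rw [h3]
    have hne1 : ((k.factorial : ℕ) : ℚ) ≠ 0 := Nat.cast_ne_zero.mpr (Nat.factorial_ne_zero _)
    have hne2 : (((n + 1 - k).factorial : ℕ) : ℚ) ≠ 0 :=
      Nat.cast_ne_zero.mpr (Nat.factorial_ne_zero _)
    have hne3 : (((n + 1).factorial : ℕ) : ℚ) ≠ 0 := Nat.cast_ne_zero.mpr (Nat.factorial_ne_zero _)
    rw [div_eq_div_iff (by positivity) hne3, ← hfac]
    ring
  rw [Finset.sum_congr rfl key, ← Finset.sum_div, h2]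

lemma hsysC (n : ℕ) :
    ∑ k ∈ range (n + 1), ((k : ℂ) * mcoef k) * cG (n - k) = (n : ℂ) * cG n := by
  rcases Nat.eq_zero_or_pos n with h | h
  · subst h; simp [mcoef]
  · rw [range_succ_eq_insert_Icc, Finset.sum_insert (by simp)]
    rw [show ((0 : ℕ) : ℂ) * mcoef 0 * cG (n - 0) = 0 by simp, zero_add]
    have key : ∀ k ∈ Finset.Icc 1 n, ((k : ℂ) * mcoef k) * cG (n - k)
        = algebraMap ℚ ℂ (bernoulli' k / (k.factorial * (n - k + 1).factorial) : ℚ) := by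
      intro k hk
      obtain ⟨hk1, hk2⟩ := Finset.mem_Icc.mp hk
      have hk0 : k ≠ 0 := by omega
      have hkc : (k : ℂ) ≠ 0 := Nat.cast_ne_zero.mpr hk0
      have hf1 : ((k.factorial : ℕ) : ℂ) ≠ 0 := Nat.cast_ne_zero.mpr (Nat.factorial_ne_zero _)
      have hf2 : (((n - k + 1).factorial : ℕ) : ℂ) ≠ 0 :=
        Nat.cast_ne_zero.mpr (Nat.factorial_ne_zero _)
      rw [mcoef, if_neg hk0, cG]
      rw [show n - k + 1 = (n - k) + 1 from rfl]
      rw [map_div₀, map_mul, eq_ratCast, eq_ratCast, eq_ratCast]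
      push_cast
      field_simp
    rw [Finset.sum_congr rfl key, ← map_sum, hQrat n h]
    rw [map_div₀, eq_ratCast, eq_ratCast]
    push_cast
    rw [cG]
    have hf3 : (((n + 1).factorial : ℕ) : ℂ) ≠ 0 := Nat.cast_ne_zero.mpr (Nat.factorial_ne_zero _)
    field_simp

lemma hI1 (x : ℂ) (n : ℕ) :
    ∑ k ∈ range (n + 1),
        (Polynomial.aeval x (Polynomial.bernoulli k) / (k.factorial : ℂ)) * cG (n - k)
      = x ^ n / (n.factorial : ℂ) := by
  have h := Polynomial.bernoulli_generating_function (A := ℂ) x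
  have h2 := congrArg (PowerSeries.coeff (n + 1)) h
  rw [PowerSeries.coeff_succ_X_mul, PowerSeries.coeff_rescale, PowerSeries.coeff_exp,
    PowerSeries.coeff_mul, Finset.Nat.sum_antidiagonal_eq_sum_range_succ_mk] at h2
  rw [Finset.sum_range_succ] at h2
  have hlast : (PowerSeries.coeff (n + 1))
      (PowerSeries.mk fun m => Polynomial.aeval x ((1 / m.factorial : ℚ) • Polynomial.bernoulli m))
        * (PowerSeries.coeff (n + 1 - (n + 1))) (PowerSeries.exp ℂ - 1) = 0 := by
    rw [Nat.sub_self, map_sub, PowerSeries.coeff_exp]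
    simp
  rw [hlast, add_zero] at h2
  have key : ∀ k ∈ range (n + 1),
      (PowerSeries.coeff k)
        (PowerSeries.mk fun m => Polynomial.aeval x ((1 / m.factorial : ℚ) • Polynomial.bernoulli m))
          * (PowerSeries.coeff (n + 1 - k)) (PowerSeries.exp ℂ - 1)
      = (Polynomial.aeval x (Polynomial.bernoulli k) / (k.factorial : ℂ)) * cG (n - k) := by
    intro k hk
    have hkn : k ≤ n := Nat.lt_succ_iff.mp (Finset.mem_range.mp hk)
    have hne : n + 1 - k ≠ 0 := by omega
    rw [PowerSeries.coeff_mk, map_sub, PowerSeries.coeff_exp, PowerSeries.coeff_one,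
      if_neg hne, sub_zero, _root_.map_smul]
    rw [show n + 1 - k = (n - k) + 1 by omega]
    rw [cG]
    rw [Rat.smul_def]
    push_cast
    ring
  rw [Finset.sum_congr rfl key] at h2
  rw [h2, eq_ratCast]
  push_cast
  ring

end Stmt18aux

open scoped NNReal ENNReal

noncomputable def Acoef (n : ℕ) (x : ℂ) : ℂ :=
  (1 / (Nat.factorial n : ℂ)) * ∑ k ∈ Finset.Icc 1 n,
    (n.choose k : ℂ) * (1 / (k : ℂ))
      * (Polynomial.aeval x (Polynomial.bernoulli (n - k)))
      * (Polynomial.aeval (1 : ℂ) (Polynomial.bernoulli k))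

namespace Stmt18aux

lemma RepOn.mono {c : ℕ → ℂ} {f : ℂ → ℂ} {r r' : ℝ≥0} (h : RepOn c f r) (h0 : 0 < r')
    (hle : r' ≤ r) : RepOn c f r' :=
  HasFPowerSeriesOnBall.mono h (by exact_mod_cast h0) (by exact_mod_cast hle)

end Stmt18aux

open Stmt18aux

theorem stmt18 (x z : ℂ) (hz0 : 0 < ‖z‖) (hz : ‖z‖ < 2 * Real.pi)
    -- `L` is the unique analytic function on `|z| < 2π` with `L(0) = 0` and
    -- `e^{L(z)} = (e^z - 1)/z`
    (L : ℂ → ℂ)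
    (hLanal : AnalyticOnNhd ℂ L (Metric.ball (0 : ℂ) (2 * Real.pi)))
    (hL0 : L 0 = 0)
    (hLexp : ∀ w ∈ Metric.ball (0 : ℂ) (2 * Real.pi), w ≠ 0 →
      Complex.exp (L w) = (Complex.exp w - 1) / w) :
    HasSum (fun n : ℕ => Acoef (n + 1) x * z ^ (n + 1))
      (z * Complex.exp (x * z) / (Complex.exp z - 1) * L z) := by
  classical
  have pi_pos := Real.pi_pos
  set Rπ : ℝ≥0 := Real.toNNReal (2 * Real.pi) with hRdef
  have hRcoe : (Rπ : ℝ) = 2 * Real.pi := Real.coe_toNNReal _ (by positivity)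
  have hRpos : 0 < Rπ := Real.toNNReal_pos.mpr (by positivity)
  have hzne : z ≠ 0 := by
    intro h; rw [h] at hz0; simp at hz0
  have hGnz : ∀ w : ℂ, ‖w‖ < 2 * Real.pi → Gfun w ≠ 0 := by
    intro w hw
    by_cases h0 : w = 0
    · subst h0; simp [Gfun]
    · rw [Gfun]
      simp only [if_neg h0]
      apply div_ne_zero _ h0
      rw [sub_ne_zero]
      intro hc
      rw [Complex.exp_eq_one_iff] at hc
      obtain ⟨m, hm⟩ := hc
      rcases eq_or_ne m 0 with hm0 | hm0
      · apply h0; rw [hm0] at hm; simpa using hm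
      · have hnorm : ‖w‖ = |(m : ℝ)| * (2 * Real.pi) := by
          rw [hm, norm_mul, norm_mul, norm_mul, Complex.norm_intCast,
            Complex.norm_I, Complex.norm_real, Real.norm_eq_abs, Complex.norm_two, mul_one,
            abs_of_pos pi_pos]
        have h1 : (1 : ℝ) ≤ |(m : ℝ)| := by
          rw [← Int.cast_abs]
          exact_mod_cast Int.one_le_abs (by omega)
        have : 2 * Real.pi ≤ ‖w‖ := by
          rw [hnorm]
          nlinarith
        linarith
  have hGL : ∀ w : ℂ, ‖w‖ < 2 * Real.pi → Complex.exp (L w) = Gfun w := by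
    intro w hw
    by_cases h0 : w = 0
    · subst h0; simp [hL0, Gfun]
    · rw [Gfun]
      simp only [if_neg h0]
      exact hLexp w (mem_ball_zero_iff.mpr hw) h0
  have hGrepBig := repG (Rπ + 1) (by positivity)
  have hGanal : ∀ w : ℂ, ‖w‖ < 2 * Real.pi → AnalyticAt ℂ Gfun w := by
    intro w hw
    apply hGrepBig.analyticAt_of_mem
    rw [mem_emetric_ball_zero_iff]
    have h1 : ‖w‖ < ((Rπ + 1 : ℝ≥0) : ℝ) := by
      rw [NNReal.coe_add, hRcoe, NNReal.coe_one]; linarith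
    exact_mod_cast h1
  have hExpAnal : ∀ w : ℂ, AnalyticAt ℂ (fun y => Complex.exp (x * y)) w := by
    intro w
    have hdiff : Differentiable ℂ (fun y : ℂ => Complex.exp (x * y)) :=
      Complex.differentiable_exp.comp (differentiable_id.const_mul x)
    exact hdiff.differentiableOn.analyticAt (Filter.univ_mem)
  -- L's local power series representation
  obtain ⟨ℓ, hℓ⟩ := hLanal 0 (Metric.mem_ball_self (by positivity))
  obtain ⟨rL, hLball⟩ := hℓ
  have hmin : (0 : ℝ≥0∞) < min rL (Rπ : ℝ≥0∞) := lt_min hLball.r_pos (by exact_mod_cast hRpos)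
  obtain ⟨ρ, hρgt, hρlt⟩ := ENNReal.lt_iff_exists_nnreal_btwn.mp hmin
  have hρ0 : 0 < ρ := by exact_mod_cast hρgt
  have hρrL : (ρ : ℝ≥0∞) ≤ rL := le_of_lt (lt_of_lt_of_le hρlt (min_le_left _ _))
  have hρπ : ρ < Rπ := by
    have := lt_of_lt_of_le hρlt (min_le_right _ _); exact_mod_cast this
  have hLrep : RepOn ℓ.coeff L ρ := toRep (hLball.mono (by exact_mod_cast hρ0) hρrL)
  -- the derivative identity
  have hderiv : ∀ w : ℂ, ‖w‖ < 2 * Real.pi → deriv Gfun w = deriv L w * Gfun w := by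
    intro w hw
    have hwmem : w ∈ Metric.ball (0 : ℂ) (2 * Real.pi) := mem_ball_zero_iff.mpr hw
    have hLd : HasDerivAt L (deriv L w) w := (hLanal w hwmem).differentiableAt.hasDerivAt
    have h1 : HasDerivAt (fun y => Complex.exp (L y)) (Complex.exp (L w) * deriv L w) w :=
      hLd.cexp
    have h2 : HasDerivAt Gfun (Complex.exp (L w) * deriv L w) w := by
      refine h1.congr_of_eventuallyEq ?_
      filter_upwards [Metric.isOpen_ball.mem_nhds hwmem] with y hy
      exact (hGL y (mem_ball_zero_iff.mp hy)).symm
    rw [h2.deriv, hGL w hw]; ring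
  -- coefficient system for L
  obtain ⟨ρ2, hρ2pos, hρ2lt⟩ := exists_between hρ0
  obtain ⟨ρ3, hρ3pos, hρ3lt⟩ := exists_between hρ2pos
  have hρ3π : (ρ3 : ℝ) < 2 * Real.pi := by
    rw [← hRcoe]
    exact_mod_cast lt_trans hρ3lt (lt_trans hρ2lt hρπ)
  have hB1 := hLrep.derivRep hρ2pos hρ2lt
  have hB2 := hB1.mul (repG ρ2 hρ2pos) hρ3pos hρ3lt
  have hB3 := hB2.congr (g := fun y => y * deriv Gfun y) (by
    intro w hw
    have hw2 : ‖w‖ < 2 * Real.pi := lt_trans hw hρ3π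
    show w * deriv L w * Gfun w = w * deriv Gfun w
    rw [hderiv w hw2]; ring)
  have hA := (repG Rπ hRpos).derivRep hρ3pos (lt_trans hρ3lt (lt_trans hρ2lt hρπ))
  have hcoefG := hA.unique hB3
  have key2 : ∀ n : ℕ, ∑ k ∈ range (n + 1), ((k : ℂ) * ℓ.coeff k) * cG (n - k)
      = (n : ℂ) * cG n := fun n => (congrFun hcoefG n).symm
  have hLc : ∀ k, ℓ.coeff k = mcoef k := by
    have hu := conv_unique (g := cG) (by rw [cG_zero]; exact one_ne_zero)
      (u := fun k => (k : ℂ) * ℓ.coeff k) (v := fun k => (k : ℂ) * mcoef k)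
      (fun n => (key2 n).trans (hsysC n).symm)
    intro k
    rcases Nat.eq_zero_or_pos k with hk | hk
    · subst hk
      rw [hLrep.coeff_zero, hL0, mcoef]; simp
    · have hkc : (k : ℂ) ≠ 0 := Nat.cast_ne_zero.mpr (by omega)
      exact mul_left_cancel₀ hkc (hu k)
  -- Fa's power series
  set Fa : ℂ → ℂ := fun w => Complex.exp (x * w) / Gfun w with hFadef
  have hG0ne : Gfun 0 ≠ 0 := by simp [Gfun]
  have hFaAnal : AnalyticAt ℂ Fa 0 :=
    (hExpAnal 0).div (hGanal 0 (by simpa using (by positivity : (0:ℝ) < 2*Real.pi))) hG0ne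
  obtain ⟨pF, hpF⟩ := hFaAnal
  obtain ⟨rF, hFball⟩ := hpF
  have hminF : (0 : ℝ≥0∞) < min rF (Rπ : ℝ≥0∞) := lt_min hFball.r_pos (by exact_mod_cast hRpos)
  obtain ⟨ρF, hρFgt, hρFlt⟩ := ENNReal.lt_iff_exists_nnreal_btwn.mp hminF
  have hρF0 : 0 < ρF := by exact_mod_cast hρFgt
  have hρFrF : (ρF : ℝ≥0∞) ≤ rF := le_of_lt (lt_of_lt_of_le hρFlt (min_le_left _ _))
  have hρFπ : ρF < Rπ := by
    have := lt_of_lt_of_le hρFlt (min_le_right _ _); exact_mod_cast this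
  have hFrep : RepOn pF.coeff Fa ρF := toRep (hFball.mono (by exact_mod_cast hρF0) hρFrF)
  obtain ⟨ρF2, hρF2pos, hρF2lt⟩ := exists_between hρF0
  have hρF2π : (ρF2 : ℝ) < 2 * Real.pi := by
    rw [← hRcoe]; exact_mod_cast lt_trans hρF2lt hρFπ
  have hFG := (hFrep.mul (repG ρF hρF0) hρF2pos hρF2lt).congr
    (g := fun w => Complex.exp (x * w)) (by
      intro w hw
      have hw2 : ‖w‖ < 2 * Real.pi := lt_trans hw hρF2π
      exact div_mul_cancel₀ _ (hGnz w hw2))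
  have hE := repE x ρF2 hρF2pos
  have hconvE := hFG.unique hE
  have hpFc : ∀ n, pF.coeff n = Polynomial.aeval x (Polynomial.bernoulli n) / (n.factorial : ℂ) :=
    conv_unique (by rw [cG_zero]; exact one_ne_zero)
      (fun n => (congrFun hconvE n).trans (hI1 x n).symm)
  -- the product function H
  set H : ℂ → ℂ := fun w => Fa w * L w with hHdef
  have hznn : ‖z‖₊ < Rπ := by
    rw [← NNReal.coe_lt_coe, coe_nnnorm, hRcoe]
    exact hz
  obtain ⟨Rz, hRz1, hRz2⟩ := exists_between hznn
  have hRzpos : 0 < Rz := lt_of_le_of_lt (by positivity) hRz1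
  have hHdiff : DifferentiableOn ℂ H (Metric.closedBall (0 : ℂ) ((Rz : ℝ))) := by
    intro w hw
    rw [Metric.mem_closedBall, dist_zero_right] at hw
    have hw2 : ‖w‖ < 2 * Real.pi := by
      rw [← hRcoe]
      exact lt_of_le_of_lt hw (by exact_mod_cast hRz2)
    have hwmem : w ∈ Metric.ball (0 : ℂ) (2 * Real.pi) := mem_ball_zero_iff.mpr hw2
    exact (((hExpAnal w).differentiableAt.div (hGanal w hw2).differentiableAt
      (hGnz w hw2)).mul (hLanal w hwmem).differentiableAt).differentiableWithinAt
  have hq := hHdiff.hasFPowerSeriesOnBall hRzpos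
  have hHrep := toRep hq
  -- local representation of H
  have hρm0 : 0 < min ρ ρF := lt_min hρ0 hρF0
  obtain ⟨ρm2, hρm2pos, hρm2lt⟩ := exists_between hρm0
  have hHloc := (hFrep.mono hρm0 (min_le_right _ _)).mul
    (hLrep.mono hρm0 (min_le_left _ _)) hρm2pos hρm2lt
  have hcoeffH := hHrep.unique hHloc
  have hzn : ‖z‖ < (Rz : ℝ) := by
    rw [← coe_nnnorm]; exact_mod_cast hRz1
  have hsumz := hHrep.hasSumAt hzn
  simp only [hcoeffH] at hsumz
  -- identify coefficients with Acoef
  have hAc : ∀ n, (∑ k ∈ range (n + 1), pF.coeff k * ℓ.coeff (n - k)) = Acoef n x := by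
    intro n
    have hc1 : ∀ k ∈ range (n + 1), pF.coeff k * ℓ.coeff (n - k)
        = (fun k => (Polynomial.aeval x (Polynomial.bernoulli k) / (k.factorial : ℂ))
            * mcoef (n - k)) k := by
      intro k _
      rw [hpFc k, hLc (n - k)]
    rw [Finset.sum_congr rfl hc1, ← Finset.sum_range_reflect]
    have hc2 : ∀ j ∈ range (n + 1),
        (fun k => (Polynomial.aeval x (Polynomial.bernoulli k) / (k.factorial : ℂ))
          * mcoef (n - k)) (n + 1 - 1 - j)
        = (Polynomial.aeval x (Polynomial.bernoulli (n - j)) / ((n - j).factorial : ℂ))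
            * mcoef j := by
      intro j hj
      have hjn : j ≤ n := Nat.lt_succ_iff.mp (Finset.mem_range.mp hj)
      simp only []
      rw [show n + 1 - 1 - j = n - j by omega, show n - (n - j) = j by omega]
    rw [Finset.sum_congr rfl hc2, Acoef, range_succ_eq_insert_Icc,
      Finset.sum_insert (by simp), show mcoef 0 = 0 by simp [mcoef], mul_zero, zero_add,
      Finset.mul_sum]
    refine Finset.sum_congr rfl fun j hj => ?_
    obtain ⟨hj1, hj2⟩ := Finset.mem_Icc.mp hj
    rw [mcoef, if_neg (by omega), aeval_one_bernoulli]
    have hfac : ((n.choose j : ℕ) : ℂ) * ((j.factorial : ℕ) : ℂ) * (((n - j).factorial : ℕ) : ℂ)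
        = ((n.factorial : ℕ) : ℂ) := by
      exact_mod_cast congrArg (Nat.cast : ℕ → ℂ)
        (Nat.choose_mul_factorial_mul_factorial hj2)
    have hne0 : ((n.factorial : ℕ) : ℂ) ≠ 0 := Nat.cast_ne_zero.mpr (Nat.factorial_ne_zero _)
    have hne1 : ((j.factorial : ℕ) : ℂ) ≠ 0 := Nat.cast_ne_zero.mpr (Nat.factorial_ne_zero _)
    have hne2 : (((n - j).factorial : ℕ) : ℂ) ≠ 0 := Nat.cast_ne_zero.mpr (Nat.factorial_ne_zero _)
    have hnej : (j : ℂ) ≠ 0 := Nat.cast_ne_zero.mpr (by omega)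
    rw [div_mul_div_comm]
    rw [show (1 : ℂ) / (n.factorial : ℂ) * ((n.choose j : ℂ) * (1 / (j : ℂ))
          * Polynomial.aeval x (Polynomial.bernoulli (n - j)) * algebraMap ℚ ℂ (bernoulli' j))
        = ((n.choose j : ℂ) * Polynomial.aeval x (Polynomial.bernoulli (n - j))
            * algebraMap ℚ ℂ (bernoulli' j)) / ((n.factorial : ℂ) * (j : ℂ)) by ring]
    rw [div_eq_div_iff (mul_ne_zero hne2 (mul_ne_zero hnej hne1)) (mul_ne_zero hne0 hnej),
      ← hfac]
    ring
  simp only [hAc] at hsumz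
  -- compute H z
  have hGz : Gfun z = (Complex.exp z - 1) / z := by
    rw [Gfun]; simp only [if_neg hzne]
  have hznorm : ‖z‖ < 2 * Real.pi := by exact hz
  have hexpne : Complex.exp z - 1 ≠ 0 := by
    have h1 := hGnz z hznorm
    rw [hGz] at h1
    intro hc
    rw [hc] at h1
    simp at h1
  have hHz : H z = z * Complex.exp (x * z) / (Complex.exp z - 1) * L z := by
    show Fa z * L z = _
    rw [show Fa z = Complex.exp (x * z) / Gfun z from rfl, hGz, div_div_eq_mul_div]
    ring
  rw [hHz] at hsumz
  have hA0 : Acoef 0 x = 0 := by simp [Acoef]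
  refine (hasSum_nat_add_iff (f := fun n => Acoef n x * z ^ n) 1).mpr ?_
  simpa [hA0] using hsumz
end
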